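/- arXiv:1403.4904 — 8 statements merged into one kernel-verified Lean document; each statement's English description precedes it below -/
import Mathlib

section
/- For an impulsive dynamical system on a compact metric space, the first impulsive time function τ₁ is lower semicontinuous on X \ D. -/
open Set Filter Topology MeasureTheory Function
open scoped NNReal ENNReal

/-- A semiflow on `X`: `φ 0 = id` and `φ (t+s) = φ t ∘ φ s`. -/
def IsSemiflow {X : Type*} (φ : ℝ≥0 → X → X) : Prop :=
  (∀ x, φ 0 x = x) ∧ ∀ (s t : ℝ≥0) (x : X), φ (t + s) x = φ t (φ s x)

/-- `x` is non-wandering for `φ`: every neighborhood `U` of `x` and every `T > 0`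
admit `t ≥ T` with `φ t ⁻¹' U ∩ U ≠ ∅`. -/
def NonWandering {X : Type*} [TopologicalSpace X] (φ : ℝ≥0 → X → X) (x : X) : Prop :=
  ∀ U ∈ nhds x, ∀ T : ℝ≥0, 0 < T → ∃ t : ℝ≥0, T ≤ t ∧ (φ t ⁻¹' U ∩ U).Nonempty

/-- The non-wandering set of `φ`. -/
def NonWanderingSet {X : Type*} [TopologicalSpace X] (φ : ℝ≥0 → X → X) : Set X :=
  {x | NonWandering φ x}

/-- The first impulsive time `τ₁(x)`: the infimum of positive times at which the base
semiflow trajectory of `x` hits `D` (equal to `∞` if it never does). -/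
noncomputable def ImpulsiveTau {X : Type*} (φb : ℝ≥0 → X → X) (D : Set X) (x : X) : ℝ≥0∞ :=
  sInf ((fun t : ℝ≥0 => (t : ℝ≥0∞)) '' {t : ℝ≥0 | 0 < t ∧ φb t x ∈ D})

/-- `φ` is the impulsive semiflow of the impulsive dynamical system `(X, φb, D, I)`:
it is a semiflow which follows `φb` strictly before the first impulsive time, and jumps
via `I` at the first impulsive time.  (Together with the semigroup property this
determines the whole impulsive trajectory.) -/
def IsImpulsiveSemiflow {X : Type*} (φb : ℝ≥0 → X → X) (D : Set X)
    (I : X → X) (φ : ℝ≥0 → X → X) : Prop :=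
  IsSemiflow φ ∧
  (∀ x, ∀ t : ℝ≥0, (t : ℝ≥0∞) < ImpulsiveTau φb D x → φ t x = φb t x) ∧
  (∀ x, ∀ t : ℝ≥0, (t : ℝ≥0∞) = ImpulsiveTau φb D x → φ t x = I (φb t x))

/-- The first impulsive time `τ₁` is lower semicontinuous on `X \ D`. -/
theorem stmt7 {X : Type*} [MetricSpace X] [CompactSpace X]
    (φb : ℝ≥0 → X → X) (D : Set X)
    (hφb : IsSemiflow φb) (hc : Continuous fun p : ℝ≥0 × X => φb p.1 p.2)
    (hD : IsCompact D) :
    LowerSemicontinuousOn (ImpulsiveTau φb D) Dᶜ := by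
  intro x hx y hy
  obtain ⟨a, hya, hax⟩ := exists_between hy
  have ha : a ≠ ∞ := fun h => (show ∞ < ImpulsiveTau φb D x from h ▸ hax).not_ge le_top
  set A := a.toNNReal with hA
  have haA : (A : ℝ≥0∞) = a := ENNReal.coe_toNNReal ha
  have hnotD : ∀ t ∈ Icc (0:ℝ≥0) A, φb t x ∉ D := by
    intro t ht htD
    rcases eq_or_lt_of_le (zero_le : (0:ℝ≥0) ≤ t) with h0 | h0
    · exact hx (by rwa [← h0, hφb.1 x] at htD)
    · have hmem : (t : ℝ≥0∞) ∈ (fun t : ℝ≥0 => (t : ℝ≥0∞)) '' {t : ℝ≥0 | 0 < t ∧ φb t x ∈ D} :=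
        mem_image_of_mem _ ⟨h0, htD⟩
      have h1 : ImpulsiveTau φb D x ≤ (t : ℝ≥0∞) := sInf_le hmem
      have h2 : (t : ℝ≥0∞) ≤ a := haA ▸ ENNReal.coe_le_coe.2 ht.2
      exact absurd ((h1.trans h2).trans_lt hax) (lt_irrefl _)
  have hev : ∀ᶠ z in 𝓝 x, ∀ t ∈ Icc (0:ℝ≥0) A, φb t z ∉ D := by
    apply isCompact_Icc.eventually_forall_of_forall_eventually
    intro t ht
    have hcont : ContinuousAt (fun p : X × ℝ≥0 => φb p.2 p.1) (x, t) :=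
      (hc.comp (continuous_snd.prodMk continuous_fst)).continuousAt
    exact hcont (hD.isClosed.isOpen_compl.mem_nhds (hnotD t ht))
  filter_upwards [hev.filter_mono nhdsWithin_le_nhds] with z hz
  refine hya.trans_le (le_sInf ?_)
  rintro b ⟨t, ⟨ht0, htD⟩, rfl⟩
  by_contra hlt
  push_neg at hlt
  have htA : t ≤ A := by
    have : (t : ℝ≥0∞) < (A : ℝ≥0∞) := haA ▸ hlt
    exact (ENNReal.coe_lt_coe.1 this).le
  exact hz t ⟨(zero_le : (0:ℝ≥0) ≤ t), htA⟩ htD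
end

section
/- If the image of the impulsive set under the impulsive function is disjoint from the impulsive set, then there exists α > 0 such that τ₁(x) > α for all x ∈ I(D); consequently all impulsive trajectories are defined for all time (T(x) = +∞ for all x). -/
open Set Filter Topology MeasureTheory Function
open scoped NNReal ENNReal

lemma tau_attained {X : Type*} [MetricSpace X] (φb : ℝ≥0 → X → X) (D : Set X)
    (hc : Continuous fun p : ℝ≥0 × X => φb p.1 p.2)
    (hD : IsClosed D) {y : X} (hfin : ImpulsiveTau φb D y ≠ ⊤) :
    φb (ImpulsiveTau φb D y).toNNReal y ∈ D := by
  set S : Set ℝ≥0 := {t : ℝ≥0 | 0 < t ∧ φb t y ∈ D} with hS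
  have hne : S.Nonempty := by
    by_contra h
    rw [Set.not_nonempty_iff_eq_empty] at h
    apply hfin
    simp [ImpulsiveTau, ← hS, h]
  have hco : ImpulsiveTau φb D y = ((sInf S : ℝ≥0) : ℝ≥0∞) := by
    rw [ImpulsiveTau, ← hS, ENNReal.coe_sInf hne, sInf_image]
  have htn : (ImpulsiveTau φb D y).toNNReal = sInf S := by
    rw [hco, ENNReal.toNNReal_coe]
  rw [htn]
  have hcl : sInf S ∈ closure S := csInf_mem_closure hne (OrderBot.bddBelow S)
  have hsub : closure S ⊆ {t : ℝ≥0 | φb t y ∈ D} := by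
    apply closure_minimal (fun t ht => ht.2)
    exact IsClosed.preimage (hc.comp (Continuous.prodMk_left y)) hD
  exact hsub hcl

/-- If `I(D) ∩ D = ∅`, then there is `α > 0` with `τ₁ > α` on `I(D)`; consequently every
impulsive trajectory is defined for all time, i.e. `T(x) = sup_n τ_n(x) = ∑ τ₁` along the
successive impulses is infinite for every `x`. -/
theorem stmt8 {X : Type*} [MetricSpace X] [CompactSpace X]
    (φb : ℝ≥0 → X → X) (D : Set X) (I : X → X)
    (hφb : IsSemiflow φb) (hc : Continuous fun p : ℝ≥0 × X => φb p.1 p.2)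
    (hD : IsCompact D) (hI : ContinuousOn I D)
    (hpos : ∀ x, 0 < ImpulsiveTau φb D x)
    (hdisj : I '' D ∩ D = ∅) :
    (∃ α : ℝ≥0∞, 0 < α ∧ ∀ y ∈ I '' D, α < ImpulsiveTau φb D y) ∧
    ∀ x : X,
      ∑' n : ℕ,
        ImpulsiveTau φb D
          ((fun y => I (φb (ImpulsiveTau φb D y).toNNReal y))^[n] x) = ∞ := by
  set K : Set X := I '' D with hK
  have hKc : IsCompact K := hD.image_of_continuousOn hI
  -- the closed "hitting" set
  set C : Set (ℝ≥0 × X) := {p | φb p.1 p.2 ∈ D} with hC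
  have hCc : IsClosed C := IsClosed.preimage hc hD.isClosed
  set S : Set ℝ≥0 := Prod.fst '' (C ∩ (Set.Icc 0 1 ×ˢ K)) with hSdef
  have hScomp : IsCompact S :=
    ((isCompact_Icc.prod hKc).inter_left hCc).image continuous_fst
  have h0 : (0 : ℝ≥0) ∉ S := by
    rintro ⟨⟨t, y⟩, ⟨hpC, -, hyK⟩, ht⟩
    simp only at ht
    subst ht
    have hpC' : φb 0 y ∈ D := hpC
    rw [hφb.1 y] at hpC'
    exact Set.eq_empty_iff_forall_notMem.mp hdisj y ⟨hyK, hpC'⟩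
  obtain ⟨ε, hε, hball⟩ := Metric.isOpen_iff.mp hScomp.isClosed.isOpen_compl 0 h0
  set β : ℝ≥0 := min ⟨ε, le_of_lt hε⟩ 1 with hβ
  have hβpos : 0 < β := lt_min (by exact_mod_cast hε) one_pos
  -- key bound: τ₁ ≥ β on K
  have hkey : ∀ y ∈ K, (β : ℝ≥0∞) ≤ ImpulsiveTau φb D y := by
    intro y hy
    apply le_sInf
    rintro b ⟨t, ⟨htpos, htD⟩, rfl⟩
    rw [ENNReal.coe_le_coe]
    by_cases h1 : t ≤ 1
    · have htS : t ∈ S := ⟨(t, y), ⟨htD, ⟨zero_le, h1⟩, hy⟩, rfl⟩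
      have : ¬ ((t : ℝ) < ε) := by
        intro hlt
        exact hball (by simpa [Metric.mem_ball, NNReal.dist_eq] using hlt) htS
      exact le_trans (min_le_left _ _) (by exact_mod_cast not_lt.mp this)
    · exact le_trans (min_le_right _ _) (le_of_lt (not_le.mp h1))
  set α : ℝ≥0∞ := (β : ℝ≥0∞) / 2 with hα
  have hαpos : 0 < α := ENNReal.div_pos (by exact_mod_cast hβpos.ne') ENNReal.ofNat_ne_top
  have hαlt : ∀ y ∈ K, α < ImpulsiveTau φb D y := by
    intro y hy
    refine lt_of_lt_of_le ?_ (hkey y hy)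
    rw [hα]
    exact ENNReal.half_lt_self (by exact_mod_cast hβpos.ne') ENNReal.coe_ne_top
  refine ⟨⟨α, hαpos, hαlt⟩, ?_⟩
  intro x
  set f : X → X := fun y => I (φb (ImpulsiveTau φb D y).toNNReal y) with hf
  by_cases htop : ∃ n, ImpulsiveTau φb D (f^[n] x) = ⊤
  · obtain ⟨n, hn⟩ := htop
    exact top_le_iff.mp (hn ▸ ENNReal.le_tsum n)
  · push_neg at htop
    have hmem : ∀ n : ℕ, f^[n + 1] x ∈ K := by
      intro n
      rw [Function.iterate_succ_apply']
      exact ⟨φb (ImpulsiveTau φb D (f^[n] x)).toNNReal (f^[n] x),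
        tau_attained φb D hc hD.isClosed (htop n), rfl⟩
    by_contra hne
    have hfin : {n : ℕ | α ≤ ImpulsiveTau φb D (f^[n] x)}.Finite :=
      ENNReal.finite_const_le_of_tsum_ne_top hne hαpos.ne'
    have hinf : {n : ℕ | α ≤ ImpulsiveTau φb D (f^[n] x)}.Infinite := by
      apply Set.infinite_of_injective_forall_mem (f := fun n : ℕ => n + 1)
        (fun a b h => by simpa using h)
      intro n
      exact le_of_lt (hαlt _ (hmem n))
    exact hinf hfin
end

section
/- For the semiflow φ of an impulsive dynamical system (X, φ̄, D, I), if x belongs to Ω_φ \ D, then φ̄_t(x) ∈ Ω_φ for all 0 ≤ t ≤ τ₁(x), where φ̄ is the underlying continuous semiflow. -/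
open Set Filter Topology MeasureTheory Function
open scoped NNReal ENNReal

/-- The non-wandering set is always closed. -/
lemma nonWanderingSet_isClosed {X : Type*} [TopologicalSpace X] (φ : ℝ≥0 → X → X) :
    IsClosed (NonWanderingSet φ) := by
  rw [← closure_subset_iff_isClosed]
  intro x hx U hU T hT
  obtain ⟨z, hz1, hz2⟩ := mem_closure_iff_nhds.mp hx (interior U) (interior_mem_nhds.mpr hU)
  exact hz2 U (mem_interior_iff_mem_nhds.mp hz1) T hT

/-- For the impulsive semiflow `φ` of `(X, φb, D, I)`: if `x ∈ Ω_φ \ D`, then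
`φb t x ∈ Ω_φ` for all `0 ≤ t ≤ τ₁(x)`. -/
theorem stmt9 {X : Type*} [MetricSpace X] [CompactSpace X]
    (φb : ℝ≥0 → X → X) (D : Set X) (I : X → X) (φ : ℝ≥0 → X → X)
    (hφb : IsSemiflow φb) (hc : Continuous fun p : ℝ≥0 × X => φb p.1 p.2)
    (hD : IsCompact D) (hI : ContinuousOn I D)
    (hpos : ∀ x, 0 < ImpulsiveTau φb D x)
    (hφ : IsImpulsiveSemiflow φb D I φ) :
    ∀ x ∈ NonWanderingSet φ \ D, ∀ t : ℝ≥0,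
      (t : ℝ≥0∞) ≤ ImpulsiveTau φb D x → φb t x ∈ NonWanderingSet φ := by
  rintro x ⟨hxNW, hxD⟩
  -- main case: strict inequality
  have main : ∀ t : ℝ≥0, (t : ℝ≥0∞) < ImpulsiveTau φb D x → φb t x ∈ NonWanderingSet φ := by
    intro t ht
    obtain ⟨t', htt', ht'⟩ := ENNReal.lt_iff_exists_nnreal_btwn.mp ht
    rw [ENNReal.coe_lt_coe] at htt'
    -- on [0, t'] the base orbit of x avoids D
    have horb : ∀ s ∈ Icc (0 : ℝ≥0) t', φb s x ∉ D := by
      intro s hs hmem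
      rcases eq_or_lt_of_le hs.1 with h0 | h0
      · rw [← h0, hφb.1] at hmem; exact hxD hmem
      · have : ImpulsiveTau φb D x ≤ (s : ℝ≥0∞) :=
          csInf_le (OrderBot.bddBelow _) ⟨s, ⟨h0, hmem⟩, rfl⟩
        exact absurd (this.trans (ENNReal.coe_le_coe.mpr hs.2)) (not_le.mpr ht')
    -- a neighborhood of x on which the whole orbit up to time t' avoids D
    have hW : ∀ᶠ z in 𝓝 x, ∀ s ∈ Icc (0 : ℝ≥0) t', φb s z ∉ D := by
      apply (isCompact_Icc (a := (0:ℝ≥0)) (b := t')).eventually_forall_of_forall_eventually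
      intro s hs
      have : IsOpen {p : X × ℝ≥0 | φb p.2 p.1 ∉ D} := by
        have : Continuous fun p : X × ℝ≥0 => φb p.2 p.1 :=
          hc.comp (continuous_snd.prodMk continuous_fst)
        exact (hD.isClosed.preimage this).isOpen_compl
      exact this.mem_nhds (horb s hs)
    obtain ⟨W, hWnhds, hWprop⟩ := eventually_iff_exists_mem.mp hW
    -- on W, the first impulsive time exceeds t
    have hτW : ∀ z ∈ W, (t : ℝ≥0∞) < ImpulsiveTau φb D z := by
      intro z hz
      have : (t' : ℝ≥0∞) ≤ ImpulsiveTau φb D z := by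
        apply le_sInf
        rintro a ⟨s, ⟨hs0, hsD⟩, rfl⟩
        by_contra hcon
        push_neg at hcon
        rw [ENNReal.coe_lt_coe] at hcon
        exact hWprop z hz s ⟨zero_le, hcon.le⟩ hsD
      exact lt_of_lt_of_le (ENNReal.coe_lt_coe.mpr htt') this
    -- show φb t x is non-wandering
    intro U hU T hT
    have hcont_t : Continuous fun z => φb t z :=
      hc.comp (continuous_const.prodMk continuous_id)
    have hVnhds : W ∩ (fun z => φb t z) ⁻¹' U ∈ 𝓝 x := by
      apply inter_mem hWnhds
      exact hcont_t.continuousAt.preimage_mem_nhds hU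
    obtain ⟨s, hsT, w, hw1, hw2⟩ :=
      hxNW _ hVnhds (T + t) (lt_of_lt_of_le hT le_self_add)
    refine ⟨s, le_trans le_self_add hsT, φ t w, ?_, ?_⟩
    · -- φ s (φ t w) ∈ U
      have h1 : φ s (φ t w) = φ t (φ s w) := by
        rw [← hφ.1.2, ← hφ.1.2, add_comm]
      have h2 : φ t (φ s w) = φb t (φ s w) := hφ.2.1 _ _ (hτW _ hw1.1)
      simp only [mem_preimage]
      rw [h1, h2]
      exact hw1.2
    · -- φ t w ∈ U
      have h2 : φ t w = φb t w := hφ.2.1 _ _ (hτW _ hw2.1)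
      rw [h2]
      exact hw2.2
  intro t ht
  rcases lt_or_eq_of_le ht with hlt | heq
  · exact main t hlt
  · -- boundary case t = τ₁(x): use closedness of the non-wandering set
    have ht0 : 0 < t := by
      by_contra h
      push_neg at h
      have : t = 0 := le_antisymm h zero_le
      rw [this] at heq
      exact absurd (heq ▸ hpos x) (by simp)
    haveI : NeBot (𝓝[<] t) := nhdsWithin_Iio_self_neBot' ⟨0, ht0⟩
    apply (nonWanderingSet_isClosed φ).mem_of_tendsto
      (f := fun s => φb s x) (b := 𝓝[<] t)
    · exact ((hc.comp (continuous_id.prodMk continuous_const)).tendsto t).mono_left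
        nhdsWithin_le_nhds
    · filter_upwards [self_mem_nhdsWithin] with s hs
      exact main s (heq ▸ ENNReal.coe_lt_coe.mpr hs)
end

section
/- Let φ be the semiflow of an impulsive dynamical system (X, φ̄, D, I). If I(Ω_φ ∩ D) ⊂ Ω_φ \ D, then Ω_φ \ D is forward invariant under φ, i.e., φ_t(Ω_φ \ D) ⊂ Ω_φ \ D for all t ≥ 0. -/
open Set Filter Topology MeasureTheory Function
open scoped NNReal ENNReal

section ImpulsiveAux
variable {X : Type*} [MetricSpace X]

private lemma impTau_le {φb : ℝ≥0 → X → X} {D : Set X} {x : X} {t : ℝ≥0}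
    (ht : 0 < t) (hmem : φb t x ∈ D) : ImpulsiveTau φb D x ≤ t :=
  sInf_le ⟨t, ⟨ht, hmem⟩, rfl⟩

private lemma impTau_attained {φb : ℝ≥0 → X → X} {D : Set X}
    (hc : Continuous fun p : ℝ≥0 × X => φb p.1 p.2) (hD : IsClosed D)
    {x : X} {s : ℝ≥0} (hs : ImpulsiveTau φb D x = s) : φb s x ∈ D := by
  set S : Set ℝ≥0 := {t : ℝ≥0 | 0 < t ∧ φb t x ∈ D} with hS
  have hSne : S.Nonempty := by
    by_contra h
    rw [not_nonempty_iff_eq_empty] at h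
    have : ImpulsiveTau φb D x = ⊤ := by
      rw [ImpulsiveTau, ← hS, h, image_empty, sInf_empty]
    rw [hs] at this
    exact ENNReal.coe_ne_top this
  have hinf : (↑(sInf S) : ℝ≥0∞) = ImpulsiveTau φb D x := by
    rw [ImpulsiveTau, ← hS, ENNReal.coe_sInf hSne, sInf_image]
  have hsinf : sInf S = s := by
    have := hinf.trans hs
    exact_mod_cast this
  have hmem : sInf S ∈ closure S := csInf_mem_closure hSne (OrderBot.bddBelow S)
  have hsub : closure S ⊆ {t : ℝ≥0 | φb t x ∈ D} := by
    apply closure_minimal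
    · intro t ht; exact ht.2
    · exact (hD.preimage (hc.comp (continuous_id.prodMk continuous_const)))
  have := hsub hmem
  rwa [hsinf] at this

/-- lower semicontinuity of the first impulsive time at points outside `D` -/
private lemma impTau_lsc {φb : ℝ≥0 → X → X} {D : Set X}
    (hφb0 : ∀ x, φb 0 x = x)
    (hc : Continuous fun p : ℝ≥0 × X => φb p.1 p.2) (hD : IsClosed D)
    {x : X} (hx : x ∉ D) {s : ℝ≥0} (hs : (s : ℝ≥0∞) < ImpulsiveTau φb D x) :
    ∃ N ∈ 𝓝 x, ∀ z ∈ N, (s : ℝ≥0∞) < ImpulsiveTau φb D z := by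
  by_contra h
  push_neg at h
  have hcl : x ∈ closure {z | ImpulsiveTau φb D z ≤ s} := by
    rw [mem_closure_iff_nhds]
    intro N hN
    obtain ⟨z, hz1, hz2⟩ := h N hN
    exact ⟨z, hz1, hz2⟩
  obtain ⟨z, hzB, hzx⟩ := mem_closure_iff_seq_limit.mp hcl
  set a : ℕ → ℝ≥0 := fun k => (ImpulsiveTau φb D (z k)).toNNReal with ha
  have hane : ∀ k, ImpulsiveTau φb D (z k) ≠ ⊤ :=
    fun k => ne_top_of_le_ne_top ENNReal.coe_ne_top (hzB k)
  have haeq : ∀ k, ImpulsiveTau φb D (z k) = (a k : ℝ≥0∞) :=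
    fun k => (ENNReal.coe_toNNReal (hane k)).symm
  have haD : ∀ k, φb (a k) (z k) ∈ D := fun k => impTau_attained hc hD (haeq k)
  have hale : ∀ k, a k ≤ s := by
    intro k
    have h2 : ImpulsiveTau φb D (z k) ≤ (s : ℝ≥0∞) := hzB k
    rw [haeq k] at h2
    exact_mod_cast h2
  have hcomp : IsCompact (Icc (0:ℝ≥0) s) := isCompact_Icc
  obtain ⟨c, hc1, ψ, hψ, hten⟩ := hcomp.tendsto_subseq
    (fun k => (⟨zero_le, hale k⟩ : a k ∈ Icc (0:ℝ≥0) s))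
  have hlim : Tendsto (fun k => φb (a (ψ k)) (z (ψ k))) atTop (𝓝 (φb c x)) := by
    have : Tendsto (fun k => ((a (ψ k), z (ψ k)) : ℝ≥0 × X)) atTop (𝓝 (c, x)) :=
      hten.prodMk_nhds (hzx.comp hψ.tendsto_atTop)
    exact (hc.tendsto (c, x)).comp this
  have hcD : φb c x ∈ D := hD.mem_of_tendsto hlim (Eventually.of_forall fun k => haD (ψ k))
  rcases eq_or_lt_of_le (zero_le : (0:ℝ≥0) ≤ c) with hc0 | hc0
  · exact hx (by rwa [← hc0, hφb0 x] at hcD)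
  · exact absurd (le_trans (impTau_le hc0 hcD) (by exact_mod_cast hc1.2)) (not_le.mpr hs)

/-- the non-wandering set is closed -/
private lemma nwSet_isClosed (φ : ℝ≥0 → X → X) : IsClosed (NonWanderingSet φ) := by
  rw [← isOpen_compl_iff, isOpen_iff_mem_nhds]
  intro x hx
  simp only [NonWanderingSet, mem_compl_iff, mem_setOf_eq, NonWandering] at hx
  push_neg at hx
  obtain ⟨U, hU, T, hT, hbad⟩ := hx
  filter_upwards [interior_mem_nhds.mpr hU] with y hy
  intro hy'
  obtain ⟨t, htT, hne⟩ := hy' U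
    (mem_nhds_iff.mpr ⟨interior U, interior_subset, isOpen_interior, hy⟩) T hT
  have hb := hbad t htT
  exact hne.ne_empty hb

/-- uniform positive lower bound for τ on a compact set disjoint from `D` -/
private lemma impTau_exists_delta {φb : ℝ≥0 → X → X} {D : Set X}
    (hφb0 : ∀ x, φb 0 x = x)
    (hc : Continuous fun p : ℝ≥0 × X => φb p.1 p.2) (hD : IsClosed D)
    {K : Set X} (hK : IsCompact K) (hKD : ∀ y ∈ K, y ∉ D) :
    ∃ δ : ℝ≥0, 0 < δ ∧ ∀ y ∈ K, (δ : ℝ≥0∞) ≤ ImpulsiveTau φb D y := by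
  by_contra h
  push_neg at h
  have hseq : ∀ k : ℕ, ∃ y ∈ K, ImpulsiveTau φb D y < (((k+1:ℕ):ℝ≥0))⁻¹ := by
    intro k
    obtain ⟨y, hyK, hy⟩ := h ((((k+1:ℕ):ℝ≥0))⁻¹) (by positivity)
    exact ⟨y, hyK, hy⟩
  choose y hyK hy using hseq
  set a : ℕ → ℝ≥0 := fun k => (ImpulsiveTau φb D (y k)).toNNReal with ha
  have hane : ∀ k, ImpulsiveTau φb D (y k) ≠ ⊤ := fun k => (hy k).ne_top
  have haeq : ∀ k, ImpulsiveTau φb D (y k) = (a k : ℝ≥0∞) :=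
    fun k => (ENNReal.coe_toNNReal (hane k)).symm
  have haD : ∀ k, φb (a k) (y k) ∈ D := fun k => impTau_attained hc hD (haeq k)
  have hale : ∀ k, a k < (((k+1:ℕ):ℝ≥0))⁻¹ := by
    intro k
    have h2 := hy k
    rw [haeq k] at h2
    exact_mod_cast h2
  obtain ⟨x, hxK, ψ, hψ, hten⟩ := hK.tendsto_subseq hyK
  have ha0 : Tendsto (fun k => a (ψ k)) atTop (𝓝 0) := by
    have hb : Tendsto (fun k : ℕ => (((k+1:ℕ):ℝ≥0))⁻¹) atTop (𝓝 0) :=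
      (tendsto_inv_atTop_nhds_zero_nat (𝕜 := ℝ≥0)).comp (tendsto_add_atTop_nat 1)
    exact tendsto_of_tendsto_of_tendsto_of_le_of_le tendsto_const_nhds
      (hb.comp hψ.tendsto_atTop) (fun k => zero_le) (fun k => (hale (ψ k)).le)
  have hlim : Tendsto (fun k => φb (a (ψ k)) (y (ψ k))) atTop (𝓝 (φb 0 x)) := by
    have : Tendsto (fun k => ((a (ψ k), y (ψ k)) : ℝ≥0 × X)) atTop (𝓝 (0, x)) :=
      ha0.prodMk_nhds hten
    exact (hc.tendsto (0, x)).comp this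
  rw [hφb0 x] at hlim
  exact hKD x hxK (hD.mem_of_tendsto hlim (Eventually.of_forall fun k => haD (ψ k)))

variable {φb : ℝ≥0 → X → X} {D : Set X} {I : X → X} {φ : ℝ≥0 → X → X}
  (hφb : IsSemiflow φb) (hc : Continuous fun p : ℝ≥0 × X => φb p.1 p.2)
  (hD : IsClosed D) (hpos : ∀ x, 0 < ImpulsiveTau φb D x)
  (hφ : IsImpulsiveSemiflow φb D I φ)

include hφb hc hD hφ in
private lemma imp_step_lt {y : X} (hy : y ∈ NonWanderingSet φ \ D) {s : ℝ≥0}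
    (hs : (s : ℝ≥0∞) < ImpulsiveTau φb D y) :
    φ s y ∈ NonWanderingSet φ \ D := by
  have hfeq : φ s y = φb s y := hφ.2.1 y s hs
  constructor
  · -- non-wandering
    intro U hU T hT
    obtain ⟨N, hN, hNτ⟩ := impTau_lsc hφb.1 hc hD hy.2 hs
    have hcont : Continuous fun z => φb s z :=
      hc.comp (continuous_const.prodMk continuous_id)
    have hU' : U ∈ 𝓝 (φb s y) := by rwa [hfeq] at hU
    have hW : (fun z => φb s z) ⁻¹' U ∈ 𝓝 y := hcont.continuousAt.preimage_mem_nhds hU'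
    obtain ⟨t, htT, z, hz1, hz2⟩ := hy.1 (((fun z => φb s z) ⁻¹' U) ∩ N) (inter_mem hW hN) T hT
    refine ⟨t, htT, φ s z, ?_, ?_⟩
    · have h1 : φ t (φ s z) = φ s (φ t z) := by
        rw [← hφ.1.2 s t z, add_comm, hφ.1.2 t s z]
      have h2 : φ s (φ t z) = φb s (φ t z) := hφ.2.1 _ s (hNτ _ hz1.2)
      simp only [mem_preimage]
      rw [h1, h2]
      exact hz1.1
    · have h2 : φ s z = φb s z := hφ.2.1 _ s (hNτ _ hz2.2)
      rw [h2]
      exact hz2.1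
  · -- not in D
    intro hmem
    rw [hfeq] at hmem
    rcases eq_or_lt_of_le (zero_le : (0:ℝ≥0) ≤ s) with h0 | h0
    · exact hy.2 (by rwa [← h0, hφb.1 y] at hmem)
    · exact absurd (impTau_le h0 hmem) (not_le.mpr hs)

include hφb hc hD hpos hφ in
private lemma imp_step_eq {y : X} (hy : y ∈ NonWanderingSet φ \ D) {s : ℝ≥0}
    (hs : (s : ℝ≥0∞) = ImpulsiveTau φb D y) :
    φ s y ∈ I '' (NonWanderingSet φ ∩ D) := by
  have hs0 : 0 < s := by
    have := hpos y
    rw [← hs] at this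
    exact_mod_cast this
  have hdD : φb s y ∈ D := impTau_attained hc hD hs.symm
  have hdΩ : φb s y ∈ NonWanderingSet φ := by
    have hne : (𝓝[<] s).NeBot := nhdsWithin_Iio_self_neBot' ⟨0, hs0⟩
    have hten : Tendsto (fun u : ℝ≥0 => φb u y) (𝓝[<] s) (𝓝 (φb s y)) :=
      ((hc.comp (continuous_id.prodMk continuous_const)).tendsto s).mono_left
        nhdsWithin_le_nhds
    have hev : ∀ᶠ u in 𝓝[<] s, φb u y ∈ NonWanderingSet φ := by
      filter_upwards [self_mem_nhdsWithin] with u hu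
      have hu' : (u : ℝ≥0∞) < ImpulsiveTau φb D y := by
        rw [← hs]; exact_mod_cast hu
      have hmem := (imp_step_lt hφb hc hD hφ hy hu').1
      rwa [hφ.2.1 y u hu'] at hmem
    have := mem_closure_of_tendsto hten hev
    rwa [(nwSet_isClosed φ).closure_eq] at this
  exact ⟨φb s y, ⟨hdΩ, hdD⟩, (hφ.2.2 y s hs).symm⟩

include hφb hc hD hpos hφ in
private lemma imp_lemA (hID : I '' (NonWanderingSet φ ∩ D) ⊆ NonWanderingSet φ \ D)
    {δ : ℝ≥0}
    (hδ : ∀ y ∈ I '' (NonWanderingSet φ ∩ D), (δ : ℝ≥0∞) ≤ ImpulsiveTau φb D y) :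
    ∀ n : ℕ, ∀ y ∈ NonWanderingSet φ \ D, ∀ t : ℝ≥0,
      ((t : ℝ≥0∞) ≤ ImpulsiveTau φb D y ∨
        (y ∈ I '' (NonWanderingSet φ ∩ D) ∧ t ≤ (n : ℝ≥0) * δ)) →
      φ t y ∈ NonWanderingSet φ \ D := by
  intro n
  induction n with
  | zero =>
    intro y hy t ht
    rcases ht with h | ⟨hK, ht0⟩
    · rcases h.lt_or_eq with h | h
      · exact imp_step_lt hφb hc hD hφ hy h
      · exact hID (imp_step_eq hφb hc hD hpos hφ hy h)
    · have ht00 : t = 0 := le_antisymm (by simpa using ht0) (zero_le : (0:ℝ≥0) ≤ t)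
      subst ht00
      rwa [hφ.1.1 y]
  | succ n ih =>
    intro y hy t ht
    rcases le_or_gt (t : ℝ≥0∞) (ImpulsiveTau φb D y) with h | h
    · rcases h.lt_or_eq with h | h
      · exact imp_step_lt hφb hc hD hφ hy h
      · exact hID (imp_step_eq hφb hc hD hpos hφ hy h)
    · rcases ht with h' | ⟨hK, htn⟩
      · exact absurd h' (not_le.mpr h)
      · have htop : ImpulsiveTau φb D y ≠ ⊤ := h.ne_top
        set a : ℝ≥0 := (ImpulsiveTau φb D y).toNNReal with haa
        have haeq : (a : ℝ≥0∞) = ImpulsiveTau φb D y := ENNReal.coe_toNNReal htop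
        have haK : φ a y ∈ I '' (NonWanderingSet φ ∩ D) :=
          imp_step_eq hφb hc hD hpos hφ hy haeq
        have hat : a ≤ t := by
          have := h.le
          rw [← haeq] at this
          exact_mod_cast this
        have hdec : φ t y = φ (t - a) (φ a y) := by
          rw [← hφ.1.2 a (t - a) y, tsub_add_cancel_of_le hat]
        rw [hdec]
        refine ih (φ a y) (hID haK) (t - a) (Or.inr ⟨haK, ?_⟩)
        have hδa : δ ≤ a := by
          have h2 := hδ y hK
          rw [← haeq] at h2
          exact_mod_cast h2
        calc t - a ≤ ((n + 1 : ℕ) : ℝ≥0) * δ - δ := tsub_le_tsub htn hδa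
          _ = (n : ℝ≥0) * δ := by
            push_cast
            rw [add_mul, one_mul, add_tsub_cancel_right]

end ImpulsiveAux

/-- If `I(Ω_φ ∩ D) ⊆ Ω_φ \ D`, then `Ω_φ \ D` is forward invariant under the
impulsive semiflow `φ`. -/

theorem stmt10 {X : Type*} [MetricSpace X] [CompactSpace X]
    (φb : ℝ≥0 → X → X) (D : Set X) (I : X → X) (φ : ℝ≥0 → X → X)
    (hφb : IsSemiflow φb) (hc : Continuous fun p : ℝ≥0 × X => φb p.1 p.2)
    (hD : IsCompact D) (hI : ContinuousOn I D)
    (hpos : ∀ x, 0 < ImpulsiveTau φb D x)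
    (hφ : IsImpulsiveSemiflow φb D I φ)
    (hID : I '' (NonWanderingSet φ ∩ D) ⊆ NonWanderingSet φ \ D) :
    ∀ t : ℝ≥0, φ t '' (NonWanderingSet φ \ D) ⊆ NonWanderingSet φ \ D := by
  have hDc : IsClosed D := hD.isClosed
  have hΩD : IsCompact (NonWanderingSet φ ∩ D) :=
    (((nwSet_isClosed φ).inter hDc)).isCompact
  have hKcomp : IsCompact (I '' (NonWanderingSet φ ∩ D)) :=
    hΩD.image_of_continuousOn (hI.mono inter_subset_right)
  obtain ⟨δ, hδ0, hδ⟩ := impTau_exists_delta hφb.1 hc hDc hKcomp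
    (fun y hy => (hID hy).2)
  intro t
  rintro _ ⟨x, hx, rfl⟩
  rcases le_or_gt (t : ℝ≥0∞) (ImpulsiveTau φb D x) with h | h
  · exact imp_lemA hφb hc hDc hpos hφ hID hδ 0 x hx t (Or.inl h)
  · have htop : ImpulsiveTau φb D x ≠ ⊤ := h.ne_top
    set a : ℝ≥0 := (ImpulsiveTau φb D x).toNNReal with haa
    have haeq : (a : ℝ≥0∞) = ImpulsiveTau φb D x := ENNReal.coe_toNNReal htop
    have haK : φ a x ∈ I '' (NonWanderingSet φ ∩ D) :=
      imp_step_eq hφb hc hDc hpos hφ hx haeq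
    have hat : a ≤ t := by
      have := h.le
      rw [← haeq] at this
      exact_mod_cast this
    have hdec : φ t x = φ (t - a) (φ a x) := by
      rw [← hφ.1.2 a (t - a) x, tsub_add_cancel_of_le hat]
    rw [hdec]
    obtain ⟨n, hn⟩ := exists_nat_ge ((t - a) / δ)
    have hle : t - a ≤ (n : ℝ≥0) * δ := by
      rw [← div_le_iff₀ hδ0]
      exact hn
    exact imp_lemA hφb hc hDc hpos hφ hID hδ n (φ a x) (hID haK) (t - a) (Or.inr ⟨haK, hle⟩)
end

section
/- For an impulsive dynamical system (X, φ̄, D, I) with impulsive semiflow φ, satisfying I(Ω_φ ∩ D) ⊂ Ω_φ \ D, the quotient π(Ω_φ) of the non-wandering set by the equivalence relation generated by the impulsive map is a compact metric space (its quotient pseudometric is a metric). -/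
open Set Filter Topology MeasureTheory Function
open scoped NNReal ENNReal

/-- The relation determined by the impulsive map: `x ∼ y` iff `x = y`, `y = I x`,
`x = I y`, or `I x = I y` (with `I` only acting on points of `D`). -/
def ImpulseRel {X : Type*} (D : Set X) (I : X → X) (x y : X) : Prop :=
  x = y ∨ (x ∈ D ∧ y = I x) ∨ (y ∈ D ∧ x = I y) ∨ (x ∈ D ∧ y ∈ D ∧ I x = I y)

set_option linter.unusedSectionVars false
set_option linter.unusedVariables false



section ImpulseAux

variable {X : Type*}

open Classical in
noncomputable def rmap (D : Set X) (I : X → X) (x : X) : X := if x ∈ D then I x else x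

def QChain (D Ω : Set X) (I : X → X) (b : X) : ℕ → X → Prop
  | 0 => fun z => z = b
  | n + 1 => fun z => z ∈ D ∧ (1 ≤ n → z ∉ Ω) ∧ QChain D Ω I b n (I z)

variable {D Ω : Set X} {I : X → X} {b x y : X}

lemma rmap_of_mem {x : X} (hx : x ∈ D) : rmap D I x = I x := if_pos hx
lemma rmap_of_not_mem {x : X} (hx : x ∉ D) : rmap D I x = x := if_neg hx

lemma qchain_down (hb : b ∉ D) {a : X} (ha : a ∈ D)
    (h : ∃ n, QChain D Ω I b n a) : ∃ n, QChain D Ω I b n (I a) := by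
  obtain ⟨n, hn⟩ := h
  cases n with
  | zero => exact absurd (hn ▸ ha) hb
  | succ m => exact ⟨m, hn.2.2⟩

lemma qchain_up (hID' : ∀ z ∈ Ω, z ∈ D → I z ∈ Ω ∧ I z ∉ D) {a : X} (ha : a ∈ D)
    (h : ∃ n, QChain D Ω I b n (I a)) : ∃ n, QChain D Ω I b n a := by
  obtain ⟨n, hn⟩ := h
  refine ⟨n + 1, ha, ?_, hn⟩
  intro h1 haΩ
  cases n with
  | zero => exact absurd h1 (by omega)
  | succ m => exact (hID' a haΩ ha).2 hn.1

lemma impulseRel_symm {z w : X} (h : ImpulseRel D I z w) : ImpulseRel D I w z := by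
  unfold ImpulseRel at *; tauto

lemma qchain_rel (hID' : ∀ z ∈ Ω, z ∈ D → I z ∈ Ω ∧ I z ∉ D) (hb : b ∉ D) {z w : X}
    (h : ImpulseRel D I z w) :
    (∃ n, QChain D Ω I b n z) → ∃ n, QChain D Ω I b n w := by
  rcases h with rfl | ⟨hz, rfl⟩ | ⟨hw, rfl⟩ | ⟨hz, hw, hIzw⟩
  · exact id
  · exact qchain_down hb hz
  · exact fun h => qchain_up hID' hw h
  · exact fun h => qchain_up hID' hw (hIzw ▸ qchain_down hb hz h)

lemma qchain_eqvGen (hID' : ∀ z ∈ Ω, z ∈ D → I z ∈ Ω ∧ I z ∉ D) (hb : b ∉ D)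
    (h : Relation.EqvGen (ImpulseRel D I) x y) :
    (∃ n, QChain D Ω I b n x) ↔ (∃ n, QChain D Ω I b n y) := by
  induction h with
  | rel a c h => exact ⟨qchain_rel hID' hb h, qchain_rel hID' hb (impulseRel_symm h)⟩
  | refl => exact Iff.rfl
  | symm a c _ ih => exact ih.symm
  | trans a c d _ _ ih1 ih2 => exact ih1.trans ih2

lemma rmap_eq_of_eqvGen (hID' : ∀ z ∈ Ω, z ∈ D → I z ∈ Ω ∧ I z ∉ D)
    (hx : x ∈ Ω) (hy : y ∈ Ω)
    (h : Relation.EqvGen (ImpulseRel D I) x y) : rmap D I x = rmap D I y := by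
  classical
  set b := rmap D I x with hb
  have hbD : b ∉ D := by
    by_cases hxD : x ∈ D
    · rw [hb, rmap_of_mem hxD]; exact (hID' x hx hxD).2
    · rw [hb, rmap_of_not_mem hxD]; exact hxD
  have hPx : ∃ n, QChain D Ω I b n x := by
    by_cases hxD : x ∈ D
    · exact ⟨1, hxD, fun h => (Nat.not_succ_le_zero 0 h).elim,
        by show I x = b; rw [hb, rmap_of_mem hxD]⟩
    · exact ⟨0, by show x = b; rw [hb, rmap_of_not_mem hxD]⟩
  obtain ⟨n, hn⟩ := (qchain_eqvGen hID' hbD h).mp hPx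
  match n, hn with
  | 0, hn =>
    have hyb : y = b := hn
    rw [rmap_of_not_mem (hyb ▸ hbD), hyb]
  | 1, hn => rw [rmap_of_mem hn.1]; exact hn.2.2.symm ▸ rfl
  | (m+2), hn => exact absurd hy (hn.2.1 (by omega))

lemma eqvGen_of_rmap_eq {x y : X} (h : rmap D I x = rmap D I y) :
    Relation.EqvGen (ImpulseRel D I) x y := by
  have h1 : ∀ z : X, Relation.EqvGen (ImpulseRel D I) z (rmap D I z) := by
    intro z; by_cases hz : z ∈ D
    · rw [rmap_of_mem hz]; exact Relation.EqvGen.rel _ _ (Or.inr (Or.inl ⟨hz, rfl⟩))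
    · rw [rmap_of_not_mem hz]; exact Relation.EqvGen.refl z
  exact Relation.EqvGen.trans _ _ _ (h ▸ h1 x) (Relation.EqvGen.symm _ _ (h1 y))

lemma mem_iff_of_eqvGen {U : Set X} (hfw : ∀ a ∈ D, a ∈ U → I a ∈ U)
    (hbw : ∀ a ∈ D, I a ∈ U → a ∈ U) {z u : X}
    (h : Relation.EqvGen (ImpulseRel D I) z u) : z ∈ U ↔ u ∈ U := by
  induction h with
  | rel a c hac =>
    rcases hac with rfl | ⟨h1, rfl⟩ | ⟨h1, rfl⟩ | ⟨h1, h2, h3⟩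
    · exact Iff.rfl
    · exact ⟨fun h => hfw a h1 h, fun h => hbw a h1 h⟩
    · exact ⟨fun h => hbw c h1 h, fun h => hfw c h1 h⟩
    · exact ⟨fun h => hbw c h2 (h3 ▸ hfw a h1 h), fun h => hbw a h1 (h3.symm ▸ hfw c h2 h)⟩
  | refl => exact Iff.rfl
  | symm _ _ _ ih => exact ih.symm
  | trans _ _ _ _ _ ih1 ih2 => exact ih1.trans ih2

end ImpulseAux


lemma isClosed_nonWanderingSet {Y : Type*} [TopologicalSpace Y] (φ : ℝ≥0 → Y → Y) :
    IsClosed (NonWanderingSet φ) := by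
  rw [← isOpen_compl_iff, isOpen_iff_mem_nhds]
  intro x hx
  simp only [mem_compl_iff, NonWanderingSet, mem_setOf_eq, NonWandering] at hx
  push_neg at hx
  obtain ⟨U, hU, T, hT, hno⟩ := hx
  refine mem_of_superset (interior_mem_nhds.mpr hU) ?_
  intro y hy hyNW
  obtain ⟨t, ht, z, hz1, hz2⟩ := hyNW (interior U) (isOpen_interior.mem_nhds hy) T hT
  have hzmem : z ∈ φ t ⁻¹' U ∩ U :=
    ⟨mem_preimage.mpr (interior_subset (mem_preimage.mp hz1)), interior_subset hz2⟩
  rw [hno t ht] at hzmem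
  exact hzmem

section SatOpen
open Metric

variable {X : Type*} [MetricSpace X] {D Ω : Set X} {I : X → X}

def GoodRad (D : Set X) (I : X → X) (Ω N' V : Set X) (a : X) (δ : ℝ) : Prop :=
  0 < δ ∧ (∀ w ∈ ball a δ ∩ D, I w ∈ V) ∧ (a ∈ Ω → ball a δ ⊆ N') ∧
    (a ∉ Ω → ball a δ ∩ Ω = ∅)

open Classical in
noncomputable def selRad (D : Set X) (I : X → X) (Ω N' V : Set X) (a : X) : ℝ :=
  if h : ∃ δ, GoodRad D I Ω N' V a δ then h.choose else 0

lemma selRad_good {N' V : Set X} {a : X} (h : ∃ δ, GoodRad D I Ω N' V a δ) :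
    GoodRad D I Ω N' V a (selRad D I Ω N' V a) := by
  rw [selRad, dif_pos h]; exact h.choose_spec

noncomputable def nextSet (D : Set X) (I : X → X) (Ω N' V : Set X) : Set X :=
  V ∪ ⋃ a ∈ D ∩ I ⁻¹' V, ball a (selRad D I Ω N' V a)

noncomputable def iterSet (D : Set X) (I : X → X) (Ω N' : Set X) : ℕ → Set X
  | 0 => N' ∩ Dᶜ
  | n + 1 => nextSet D I Ω N' (iterSet D I Ω N' n)

lemma goodRad_exists (hI : ContinuousOn I D) (hΩ : IsClosed Ω)
    (hID' : ∀ z ∈ Ω, z ∈ D → I z ∈ Ω ∧ I z ∉ D)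
    {N' : Set X} (hN' : IsOpen N') (hsat1 : ∀ u ∈ Ω, u ∈ D → I u ∈ N' → u ∈ N')
    {V : Set X} (hVo : IsOpen V) (hVN : V ∩ Ω ⊆ N') {a : X} (haD : a ∈ D)
    (haV : I a ∈ V) : ∃ δ, GoodRad D I Ω N' V a δ := by
  have h1 : I ⁻¹' V ∈ 𝓝[D] a := hI a haD (hVo.mem_nhds haV)
  rw [Metric.mem_nhdsWithin_iff] at h1
  obtain ⟨ε₁, hε₁, hball⟩ := h1
  by_cases haΩ : a ∈ Ω
  · have haN : a ∈ N' := by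
      refine hsat1 a haΩ haD (hVN ⟨haV, (hID' a haΩ haD).1⟩)
    obtain ⟨ε₂, hε₂, h2⟩ := Metric.isOpen_iff.mp hN' a haN
    refine ⟨min ε₁ ε₂, lt_min hε₁ hε₂, ?_, ?_, ?_⟩
    · exact fun w hw => hball ⟨ball_subset_ball (min_le_left _ _) hw.1, hw.2⟩
    · exact fun _ => (ball_subset_ball (min_le_right _ _)).trans h2
    · exact fun h => absurd haΩ h
  · obtain ⟨ε₂, hε₂, h2⟩ := Metric.isOpen_iff.mp hΩ.isOpen_compl a haΩ
    refine ⟨min ε₁ ε₂, lt_min hε₁ hε₂, ?_, ?_, ?_⟩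
    · exact fun w hw => hball ⟨ball_subset_ball (min_le_left _ _) hw.1, hw.2⟩
    · exact fun h => absurd h haΩ
    · intro _
      rw [eq_empty_iff_forall_notMem]
      exact fun z hz => h2 (ball_subset_ball (min_le_right _ _) hz.1) hz.2

lemma exists_saturated_open
    (hD : IsCompact D) (hI : ContinuousOn I D) (hΩ : IsClosed Ω)
    (hID' : ∀ z ∈ Ω, z ∈ D → I z ∈ Ω ∧ I z ∉ D)
    {N' : Set X} (hN' : IsOpen N') (hsat : ∀ u ∈ Ω, u ∈ D → (I u ∈ N' ↔ u ∈ N'))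
    {x₀ : X} (hx₀ : x₀ ∈ Ω) (hx₀N : x₀ ∈ N') :
    ∃ U : Set X, IsOpen U ∧ x₀ ∈ U ∧ (∀ a ∈ D, a ∈ U → I a ∈ U) ∧
      (∀ a ∈ D, I a ∈ U → a ∈ U) ∧ U ∩ Ω ⊆ N' := by
  have hsat1 : ∀ u ∈ Ω, u ∈ D → I u ∈ N' → u ∈ N' := fun u h1 h2 h3 => (hsat u h1 h2).mp h3
  have hinv : ∀ n, IsOpen (iterSet D I Ω N' n) ∧
      (∀ a ∈ D, a ∈ iterSet D I Ω N' n → I a ∈ iterSet D I Ω N' n) ∧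
      iterSet D I Ω N' n ∩ Ω ⊆ N' := by
    intro n; induction n with
    | zero =>
      refine ⟨hN'.inter hD.isClosed.isOpen_compl, ?_, fun z hz => hz.1.1⟩
      exact fun a haD ha => absurd haD ha.2
    | succ n ih =>
      obtain ⟨ho, hfw, hN⟩ := ih
      have hgood : ∀ a ∈ D ∩ I ⁻¹' iterSet D I Ω N' n,
          GoodRad D I Ω N' (iterSet D I Ω N' n) a (selRad D I Ω N' (iterSet D I Ω N' n) a) :=
        fun a ha => selRad_good (goodRad_exists hI hΩ hID' hN' hsat1 ho hN ha.1 ha.2)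
      refine ⟨ho.union (isOpen_biUnion fun a _ => isOpen_ball), ?_, ?_⟩
      · rintro a haD (h | h)
        · exact Or.inl (hfw a haD h)
        · simp only [mem_iUnion, exists_prop] at h
          obtain ⟨a', ha', hball⟩ := h
          exact Or.inl ((hgood a' ha').2.1 a ⟨hball, haD⟩)
      · rintro z ⟨(h | h), hzΩ⟩
        · exact hN ⟨h, hzΩ⟩
        · simp only [mem_iUnion, exists_prop] at h
          obtain ⟨a', ha', hball⟩ := h
          by_cases ha'Ω : a' ∈ Ω
          · exact (hgood a' ha').2.2.1 ha'Ω hball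
          · exact absurd (mem_inter hball hzΩ)
              (by rw [(hgood a' ha').2.2.2 ha'Ω]; exact notMem_empty z)
  have habs : ∀ n, ∀ a ∈ D, I a ∈ iterSet D I Ω N' n → a ∈ iterSet D I Ω N' (n + 1) := by
    intro n a haD haI
    have hg := selRad_good (goodRad_exists hI hΩ hID' hN' hsat1 (hinv n).1 (hinv n).2.2 haD haI)
    exact Or.inr (mem_biUnion ⟨haD, haI⟩ (mem_ball_self hg.1))
  refine ⟨⋃ n, iterSet D I Ω N' n, isOpen_iUnion fun n => (hinv n).1, ?_, ?_, ?_, ?_⟩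
  · by_cases hx₀D : x₀ ∈ D
    · have hb : I x₀ ∈ iterSet D I Ω N' 0 :=
        ⟨(hsat x₀ hx₀ hx₀D).mpr hx₀N, (hID' x₀ hx₀ hx₀D).2⟩
      exact mem_iUnion.mpr ⟨1, habs 0 x₀ hx₀D hb⟩
    · exact mem_iUnion.mpr ⟨0, ⟨hx₀N, hx₀D⟩⟩
  · intro a haD h
    obtain ⟨n, hn⟩ := mem_iUnion.mp h
    exact mem_iUnion.mpr ⟨n, (hinv n).2.1 a haD hn⟩
  · intro a haD h
    obtain ⟨n, hn⟩ := mem_iUnion.mp h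
    exact mem_iUnion.mpr ⟨n + 1, habs n a haD hn⟩
  · rintro z ⟨hz, hzΩ⟩
    obtain ⟨n, hn⟩ := mem_iUnion.mp hz
    exact (hinv n).2.2 ⟨hn, hzΩ⟩

end SatOpen

section Quot
variable {X : Type*} [MetricSpace X]

variable (D : Set X) (I : X → X) (Ω : Set X)

def rSetoid : Setoid ↥Ω :=
  ⟨fun x y => rmap D I ↑x = rmap D I ↑y, ⟨fun _ => rfl, Eq.symm, Eq.trans⟩⟩

def satQ (A : Set ↥Ω) : Set ↥Ω := {z : ↥Ω | ∃ w ∈ A, rmap D I ↑z = rmap D I ↑w}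

variable {D I Ω}

lemma satQ_mono {A : Set ↥Ω} (h : A ⊆ satQ D I Ω A → A ⊆ satQ D I Ω A) : True := trivial

lemma subset_satQ {A : Set ↥Ω} : A ⊆ satQ D I Ω A := fun z hz => ⟨z, hz, rfl⟩

lemma isClosed_relSet (hD : IsCompact D) (hI : ContinuousOn I D)
    (hID' : ∀ z ∈ Ω, z ∈ D → I z ∈ Ω ∧ I z ∉ D) :
    IsClosed {p : ↥Ω × ↥Ω | rmap D I ↑p.1 = rmap D I ↑p.2} := by
  classical
  have key : {p : ↥Ω × ↥Ω | rmap D I ↑p.1 = rmap D I ↑p.2} =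
      (fun p : ↥Ω × ↥Ω => ((p.1 : X), (p.2 : X))) ⁻¹'
        (diagonal X ∪ (((fun u => (u, I u)) '' D) ∪ (((fun u => (I u, u)) '' D) ∪
          ((D ×ˢ D) ∩ (fun q : X × X => (I q.1, I q.2)) ⁻¹' diagonal X)))) := by
    ext ⟨u, v⟩
    simp only [mem_setOf_eq, mem_preimage, mem_union, mem_diagonal_iff, mem_image,
      mem_inter_iff, mem_prod]
    constructor
    · intro h
      by_cases hu : (u : X) ∈ D <;> by_cases hv : (v : X) ∈ D
      · exact Or.inr (Or.inr (Or.inr ⟨⟨hu, hv⟩, by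
          simpa [mem_diagonal_iff, rmap_of_mem hu, rmap_of_mem hv] using h⟩))
      · refine Or.inr (Or.inl ⟨u, hu, ?_⟩)
        rw [rmap_of_mem hu, rmap_of_not_mem hv] at h
        exact Prod.ext rfl h
      · refine Or.inr (Or.inr (Or.inl ⟨v, hv, ?_⟩))
        rw [rmap_of_not_mem hu, rmap_of_mem hv] at h
        exact Prod.ext h.symm rfl
      · rw [rmap_of_not_mem hu, rmap_of_not_mem hv] at h
        exact Or.inl h
    · rintro (h | ⟨w, hw, heq⟩ | ⟨w, hw, heq⟩ | ⟨⟨hu, hv⟩, h⟩)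
      · simp [h]
      · obtain ⟨h1, h2⟩ := Prod.ext_iff.mp heq
        simp only at h1 h2
        have hu : (u : X) ∈ D := h1 ▸ hw
        have hvI : (v : X) = I u := by rw [← h2, h1]
        have hvD : (v : X) ∉ D := by rw [hvI]; exact (hID' u u.2 hu).2
        rw [rmap_of_mem hu, rmap_of_not_mem hvD, hvI]
      · obtain ⟨h1, h2⟩ := Prod.ext_iff.mp heq
        simp only at h1 h2
        have hv : (v : X) ∈ D := h2 ▸ hw
        have huI : (u : X) = I v := by rw [← h1, h2]
        have huD : (u : X) ∉ D := by rw [huI]; exact (hID' v v.2 hv).2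
        rw [rmap_of_mem hv, rmap_of_not_mem huD, huI]
      · rw [rmap_of_mem hu, rmap_of_mem hv]
        exact h
  rw [key]
  refine IsClosed.preimage (by fun_prop) ?_
  refine isClosed_diagonal.union (IsClosed.union ?_ (IsClosed.union ?_ ?_))
  · exact (hD.image_of_continuousOn (continuousOn_id.prodMk hI)).isClosed
  · exact (hD.image_of_continuousOn (hI.prodMk continuousOn_id)).isClosed
  · refine ContinuousOn.preimage_isClosed_of_isClosed ?_
      (hD.isClosed.prod hD.isClosed) isClosed_diagonal
    exact (hI.comp continuousOn_fst fun q hq => hq.1).prodMk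
      (hI.comp continuousOn_snd fun q hq => hq.2)

lemma isClosed_satQ (hΩ : IsCompact Ω) (hD : IsCompact D) (hI : ContinuousOn I D)
    (hID' : ∀ z ∈ Ω, z ∈ D → I z ∈ Ω ∧ I z ∉ D) {A : Set ↥Ω} (hA : IsClosed A) :
    IsClosed (satQ D I Ω A) := by
  haveI : CompactSpace ↥Ω := isCompact_iff_compactSpace.mp hΩ
  have h1 : satQ D I Ω A =
      Prod.fst '' ({p : ↥Ω × ↥Ω | rmap D I ↑p.1 = rmap D I ↑p.2} ∩ Prod.snd ⁻¹' A) := by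
    ext z
    constructor
    · rintro ⟨w, hw, h⟩; exact ⟨(z, w), ⟨h, hw⟩, rfl⟩
    · rintro ⟨⟨z', w⟩, ⟨h, hw⟩, rfl⟩; exact ⟨w, hw, h⟩
  rw [h1]
  exact ((((isClosed_relSet hD hI hID').inter
    (hA.preimage continuous_snd)).isCompact).image continuous_fst).isClosed

lemma satQ_saturated {A : Set ↥Ω} {z w : ↥Ω} (h : rmap D I ↑z = rmap D I ↑w)
    (hw : w ∈ satQ D I Ω A) : z ∈ satQ D I Ω A := by
  obtain ⟨u, hu, h2⟩ := hw
  exact ⟨u, hu, h.trans h2⟩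

lemma preimage_image_mk_of_saturated {W : Set ↥Ω}
    (hsat : ∀ z w : ↥Ω, rmap D I ↑z = rmap D I ↑w → w ∈ W → z ∈ W) :
    Quotient.mk (rSetoid D I Ω) ⁻¹' (Quotient.mk (rSetoid D I Ω) '' W) = W := by
  ext z
  simp only [mem_preimage, mem_image]
  constructor
  · rintro ⟨w, hw, heq⟩
    exact hsat z w (Quotient.exact heq.symm) hw
  · exact fun hz => ⟨z, hz, rfl⟩

lemma isOpen_image_mk_of_saturated {W : Set ↥Ω} (hW : IsOpen W)
    (hsat : ∀ z w : ↥Ω, rmap D I ↑z = rmap D I ↑w → w ∈ W → z ∈ W) :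
    IsOpen (Quotient.mk (rSetoid D I Ω) '' W) := by
  rw [← (isQuotientMap_quotient_mk' (s := rSetoid D I Ω)).isOpen_preimage]
  show IsOpen (Quotient.mk (rSetoid D I Ω) ⁻¹' _)
  rw [preimage_image_mk_of_saturated hsat]
  exact hW

lemma t2_quotR (hΩ : IsCompact Ω) (hD : IsCompact D) (hI : ContinuousOn I D)
    (hID' : ∀ z ∈ Ω, z ∈ D → I z ∈ Ω ∧ I z ∉ D) :
    T2Space (Quotient (rSetoid D I Ω)) := by
  haveI : CompactSpace ↥Ω := isCompact_iff_compactSpace.mp hΩ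
  constructor
  intro m₁ m₂ hne
  obtain ⟨x, rfl⟩ := Quotient.exists_rep m₁
  obtain ⟨y, rfl⟩ := Quotient.exists_rep m₂
  have hC₁ : IsClosed (satQ D I Ω {x}) := isClosed_satQ hΩ hD hI hID' isClosed_singleton
  have hC₂ : IsClosed (satQ D I Ω {y}) := isClosed_satQ hΩ hD hI hID' isClosed_singleton
  have hdisj : Disjoint (satQ D I Ω {x}) (satQ D I Ω {y}) := by
    rw [Set.disjoint_left]
    rintro z ⟨w₁, hw₁, h₁⟩ ⟨w₂, hw₂, h₂⟩
    rw [mem_singleton_iff] at hw₁ hw₂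
    subst hw₁; subst hw₂
    exact hne (Quotient.sound (h₁.symm.trans h₂))
  obtain ⟨V₁, V₂, hV₁o, hV₂o, hCV₁, hCV₂, hVd⟩ := normal_separation hC₁ hC₂ hdisj
  have hsatW : ∀ V : Set ↥Ω, ∀ z w : ↥Ω, rmap D I ↑z = rmap D I ↑w →
      w ∈ (satQ D I Ω Vᶜ)ᶜ → z ∈ (satQ D I Ω Vᶜ)ᶜ := by
    intro V z w h hw hz
    exact hw (satQ_saturated h.symm hz)
  have hWsub : ∀ V : Set ↥Ω, (satQ D I Ω Vᶜ)ᶜ ⊆ V := by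
    intro V z hz
    by_contra hzV
    exact hz (subset_satQ hzV)
  have hmemW : ∀ (V : Set ↥Ω) (z : ↥Ω), satQ D I Ω {z} ⊆ V → z ∈ (satQ D I Ω Vᶜ)ᶜ := by
    intro V z hsub hmem
    obtain ⟨w, hw, h⟩ := hmem
    exact hw (hsub ⟨z, rfl, h.symm⟩)
  refine ⟨Quotient.mk _ '' (satQ D I Ω V₁ᶜ)ᶜ, Quotient.mk _ '' (satQ D I Ω V₂ᶜ)ᶜ,
    isOpen_image_mk_of_saturated
      ((isClosed_satQ hΩ hD hI hID' hV₁o.isClosed_compl).isOpen_compl) (hsatW V₁),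
    isOpen_image_mk_of_saturated
      ((isClosed_satQ hΩ hD hI hID' hV₂o.isClosed_compl).isOpen_compl) (hsatW V₂),
    ⟨x, hmemW V₁ x hCV₁, rfl⟩, ⟨y, hmemW V₂ y hCV₂, rfl⟩, ?_⟩
  rw [Set.disjoint_left]
  rintro m ⟨z₁, hz₁, he₁⟩ ⟨z₂, hz₂, he₂⟩
  have hr : rmap D I ↑z₁ = rmap D I ↑z₂ := Quotient.exact (he₁.trans he₂.symm)
  have : z₁ ∈ (satQ D I Ω V₂ᶜ)ᶜ := hsatW V₂ z₁ z₂ hr hz₂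
  exact Set.disjoint_left.mp hVd (hWsub V₁ hz₁) (hWsub V₂ this)

lemma secondCountable_quotR [SecondCountableTopology X]
    (hΩ : IsCompact Ω) (hD : IsCompact D) (hI : ContinuousOn I D)
    (hID' : ∀ z ∈ Ω, z ∈ D → I z ∈ Ω ∧ I z ∉ D) :
    SecondCountableTopology (Quotient (rSetoid D I Ω)) := by
  classical
  haveI : CompactSpace ↥Ω := isCompact_iff_compactSpace.mp hΩ
  set q : ↥Ω → Quotient (rSetoid D I Ω) := Quotient.mk (rSetoid D I Ω) with hq
  have hqc : Continuous q := continuous_quot_mk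
  obtain ⟨Bseq, hBseq⟩ := Set.Countable.exists_eq_range
    ((TopologicalSpace.countable_countableBasis ↥Ω).insert ∅) (insert_nonempty _ _)
  have hBopen : ∀ i, IsOpen (Bseq i) := by
    intro i
    have : Bseq i ∈ insert ∅ (TopologicalSpace.countableBasis ↥Ω) := by
      rw [hBseq]; exact mem_range_self i
    rcases this with h | h
    · rw [h]; exact isOpen_empty
    · exact TopologicalSpace.isOpen_of_mem_countableBasis h
  set cand : Finset ℕ → Set (Quotient (rSetoid D I Ω)) :=
    fun F => (q '' satQ D I Ω ((⋃ i ∈ F, Bseq i)ᶜ))ᶜ with hcand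
  have hcando : ∀ F, IsOpen (cand F) := by
    intro F
    have hclosed : IsClosed (satQ D I Ω ((⋃ i ∈ F, Bseq i)ᶜ)) :=
      isClosed_satQ hΩ hD hI hID'
        (isOpen_biUnion fun i _ => hBopen i).isClosed_compl
    have hpre : q ⁻¹' (q '' satQ D I Ω ((⋃ i ∈ F, Bseq i)ᶜ)) =
        satQ D I Ω ((⋃ i ∈ F, Bseq i)ᶜ) :=
      preimage_image_mk_of_saturated fun z w h hw => satQ_saturated h hw
    have : IsClosed (q '' satQ D I Ω ((⋃ i ∈ F, Bseq i)ᶜ)) := by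
      rw [← (isQuotientMap_quotient_mk' (s := rSetoid D I Ω)).isClosed_preimage]
      show IsClosed (q ⁻¹' _)
      rw [hpre]; exact hclosed
    exact this.isOpen_compl
  refine TopologicalSpace.IsTopologicalBasis.secondCountableTopology
    (b := range cand) ?_ (countable_range _)
  refine TopologicalSpace.isTopologicalBasis_of_isOpen_of_nhds ?_ ?_
  · rintro u ⟨F, rfl⟩; exact hcando F
  · intro m u hmu huo
    obtain ⟨x, rfl⟩ := Quotient.exists_rep m
    have hCc : IsCompact (satQ D I Ω ({x} : Set ↥Ω)) :=
      (isClosed_satQ hΩ hD hI hID' isClosed_singleton).isCompact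
    have hCu : satQ D I Ω ({x} : Set ↥Ω) ⊆ q ⁻¹' u := by
      rintro z ⟨w, hw, h⟩
      rw [mem_singleton_iff] at hw
      have : q z = q x := Quotient.sound (hw ▸ h)
      rw [mem_preimage, this]; exact hmu
    have hcover : satQ D I Ω ({x} : Set ↥Ω) ⊆
        ⋃ i : {i : ℕ // Bseq i ⊆ q ⁻¹' u}, Bseq ↑i := by
      intro z hz
      obtain ⟨v, hvB, hzv, hvu⟩ :=
        (TopologicalSpace.isBasis_countableBasis ↥Ω).exists_subset_of_mem_open
          (hCu hz) (huo.preimage hqc)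
      have : v ∈ range Bseq := by rw [← hBseq]; exact mem_insert_of_mem _ hvB
      obtain ⟨i, rfl⟩ := this
      exact mem_iUnion.mpr ⟨⟨i, hvu⟩, hzv⟩
    obtain ⟨t, ht⟩ := hCc.elim_finite_subcover
      (fun i : {i : ℕ // Bseq i ⊆ q ⁻¹' u} => Bseq ↑i) (fun i => hBopen ↑i) hcover
    refine ⟨cand (t.image Subtype.val), ⟨_, rfl⟩, ?_, ?_⟩
    · intro hmem
      obtain ⟨z, hz, hqz⟩ := hmem
      obtain ⟨w, hw, hrm⟩ := hz
      have hzx : rmap D I ↑z = rmap D I ↑x := Quotient.exact hqz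
      have hwx : w ∈ satQ D I Ω ({x} : Set ↥Ω) := ⟨x, rfl, hrm.symm.trans hzx⟩
      have := ht hwx
      rw [mem_iUnion₂] at this  -- ⋃ i ∈ t
      obtain ⟨i, hi, hwi⟩ := this
      refine hw (mem_iUnion₂.mpr ⟨↑i, ?_, hwi⟩)
      exact Finset.mem_image.mpr ⟨i, hi, rfl⟩
    · intro m' hm'
      obtain ⟨y, rfl⟩ := Quotient.exists_rep m'
      have hy1 : y ∉ satQ D I Ω ((⋃ i ∈ t.image Subtype.val, Bseq i)ᶜ) := by
        intro hmem
        exact hm' ⟨y, hmem, rfl⟩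
      have hy2 : y ∈ ⋃ i ∈ t.image Subtype.val, Bseq i := by
        by_contra h
        exact hy1 (subset_satQ h)
      rw [mem_iUnion₂] at hy2
      obtain ⟨i, hi, hyi⟩ := hy2
      obtain ⟨j, hj, rfl⟩ := Finset.mem_image.mp hi
      exact j.2 hyi

end Quot

/-- Under `I(Ω_φ ∩ D) ⊆ Ω_φ \ D` ... -/
theorem stmt12 {X : Type*} [MetricSpace X] [CompactSpace X]
    (φb : ℝ≥0 → X → X) (D : Set X) (I : X → X) (φ : ℝ≥0 → X → X)
    (hφb : IsSemiflow φb) (hc : Continuous fun p : ℝ≥0 × X => φb p.1 p.2)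
    (hD : IsCompact D) (hI : ContinuousOn I D)
    (hpos : ∀ x, 0 < ImpulsiveTau φb D x)
    (hφ : IsImpulsiveSemiflow φb D I φ)
    (hID : I '' (NonWanderingSet φ ∩ D) ⊆ NonWanderingSet φ \ D) :
    IsCompact (Quotient.mk (Relation.EqvGen.setoid (ImpulseRel D I)) '' NonWanderingSet φ) ∧
    T0Space ↥(Quotient.mk (Relation.EqvGen.setoid (ImpulseRel D I)) '' NonWanderingSet φ) ∧
    TopologicalSpace.MetrizableSpace
      ↥(Quotient.mk (Relation.EqvGen.setoid (ImpulseRel D I)) '' NonWanderingSet φ) := by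
  classical
  set Ω : Set X := NonWanderingSet φ with hΩdef
  have hΩc : IsClosed Ω := isClosed_nonWanderingSet φ
  have hΩcomp : IsCompact Ω := hΩc.isCompact
  have hID' : ∀ z ∈ Ω, z ∈ D → I z ∈ Ω ∧ I z ∉ D := by
    intro z h1 h2
    have := hID ⟨z, ⟨h1, h2⟩, rfl⟩
    exact ⟨this.1, this.2⟩
  set st := Relation.EqvGen.setoid (ImpulseRel D I) with hst
  set π : X → Quotient st := Quotient.mk st with hπ
  have hπc : Continuous π := continuous_quot_mk
  have hScomp : IsCompact (π '' Ω) := hΩcomp.image hπc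
  rcases Ω.eq_empty_or_nonempty with hne | hne
  · -- empty case
    haveI : IsEmpty ↥(π '' Ω) := by
      rw [hne, Set.image_empty]
      exact Set.instIsEmptyElemEmptyCollection _
    haveI : CompactSpace ↥(π '' Ω) := Finite.compactSpace
    have hcont : Continuous (fun p : ↥(π '' Ω) => (0 : ℝ)) := continuous_const
    have hcont' : Continuous (fun p : ↥(π '' Ω) => (isEmptyElim p : ℝ)) := by
      constructor
      intro s _
      rw [Set.eq_empty_of_isEmpty ((fun p : ↥(π '' Ω) => (isEmptyElim p : ℝ)) ⁻¹' s)]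
      exact isOpen_empty
    have hinj : Function.Injective (fun p : ↥(π '' Ω) => (isEmptyElim p : ℝ)) :=
      fun a => isEmptyElim a
    have hemb := hcont'.isClosedEmbedding hinj
    exact ⟨hScomp, ⟨fun x y _ => Subsingleton.elim x y⟩,
      hemb.toIsEmbedding.metrizableSpace⟩
  · obtain ⟨d₀, hd₀⟩ := hne
    set M := Quotient (rSetoid D I Ω) with hM
    set qM : ↥Ω → M := Quotient.mk (rSetoid D I Ω) with hqM
    have hqMc : Continuous qM := continuous_quot_mk
    set f : X → M := fun x =>
      if h : ∃ y : ↥Ω, Relation.EqvGen (ImpulseRel D I) x ↑y then qM h.choose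
      else qM ⟨d₀, hd₀⟩ with hf
    have hf_eq : ∀ x (hx : x ∈ Ω), f x = qM ⟨x, hx⟩ := by
      intro x hx
      have hex : ∃ y : ↥Ω, Relation.EqvGen (ImpulseRel D I) x ↑y :=
        ⟨⟨x, hx⟩, Relation.EqvGen.refl x⟩
      rw [hf]
      simp only [dif_pos hex]
      exact Quotient.sound (rmap_eq_of_eqvGen hID' hex.choose.2 hx
        (Relation.EqvGen.symm _ _ hex.choose_spec))
    have hconst : ∀ a b, Relation.EqvGen (ImpulseRel D I) a b → f a = f b := by
      intro a b hab
      by_cases ha : ∃ y : ↥Ω, Relation.EqvGen (ImpulseRel D I) a ↑y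
      · have hb : ∃ y : ↥Ω, Relation.EqvGen (ImpulseRel D I) b ↑y :=
          ⟨ha.choose, Relation.EqvGen.trans _ _ _
            (Relation.EqvGen.symm _ _ hab) ha.choose_spec⟩
        rw [hf]
        simp only [dif_pos ha, dif_pos hb]
        refine Quotient.sound (rmap_eq_of_eqvGen hID' ha.choose.2 hb.choose.2 ?_)
        exact Relation.EqvGen.trans _ _ _
          (Relation.EqvGen.trans _ _ _ (Relation.EqvGen.symm _ _ ha.choose_spec) hab)
          hb.choose_spec
      · have hb : ¬ ∃ y : ↥Ω, Relation.EqvGen (ImpulseRel D I) b ↑y := by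
          rintro ⟨y, hy⟩
          exact ha ⟨y, Relation.EqvGen.trans _ _ _ hab hy⟩
        rw [hf]
        simp only [dif_neg ha, dif_neg hb]
    set F : Quotient st → M := Quotient.lift f hconst with hF
    have hFmk : ∀ x (hx : x ∈ Ω), F (π x) = qM ⟨x, hx⟩ := fun x hx => hf_eq x hx
    have hinj : Function.Injective (fun p : ↥(π '' Ω) => F ↑p) := by
      rintro ⟨p₁, hp₁⟩ ⟨p₂, hp₂⟩ h
      obtain ⟨x, hx, rfl⟩ := hp₁
      obtain ⟨y, hy, rfl⟩ := hp₂
      simp only at h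
      rw [hFmk x hx, hFmk y hy] at h
      have hr : rmap D I x = rmap D I y := Quotient.exact h
      exact Subtype.ext (Quotient.sound (eqvGen_of_rmap_eq hr))
    have hcont : Continuous (fun p : ↥(π '' Ω) => F ↑p) := by
      rw [continuous_def]
      intro O hO
      have hNopen : IsOpen (qM ⁻¹' O) := hO.preimage hqMc
      obtain ⟨N', hN'o, hN'eq⟩ := isOpen_induced_iff.mp hNopen
      have hmemN' : ∀ x (hx : x ∈ Ω), x ∈ N' ↔ qM ⟨x, hx⟩ ∈ O := by
        intro x hx
        constructor
        · intro h
          have h2 : (⟨x, hx⟩ : ↥Ω) ∈ Subtype.val ⁻¹' N' := h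
          rw [hN'eq] at h2; exact h2
        · intro h
          have h2 : (⟨x, hx⟩ : ↥Ω) ∈ qM ⁻¹' O := h
          rw [← hN'eq] at h2; exact h2
      have hsatN : ∀ u ∈ Ω, u ∈ D → (I u ∈ N' ↔ u ∈ N') := by
        intro u hu huD
        have hIu : I u ∈ Ω := (hID' u hu huD).1
        have hq : qM ⟨I u, hIu⟩ = qM ⟨u, hu⟩ := Quotient.sound (by
          show rmap D I (I u) = rmap D I u
          rw [rmap_of_not_mem (hID' u hu huD).2, rmap_of_mem huD])
        rw [hmemN' _ hIu, hmemN' _ hu, hq]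
      have hUex : ∀ z : {z : ↥Ω // qM z ∈ O}, ∃ U : Set X, IsOpen U ∧ ↑↑z ∈ U ∧
          (∀ a ∈ D, a ∈ U → I a ∈ U) ∧ (∀ a ∈ D, I a ∈ U → a ∈ U) ∧ U ∩ Ω ⊆ N' := by
        intro z
        refine exists_saturated_open hD hI hΩc hID' hN'o hsatN z.1.2 ?_
        exact (hmemN' ↑z.1 z.1.2).mpr z.2
      choose Us hUo hUm hUfw hUbw hUΩ using hUex
      set Ustar := ⋃ z, Us z with hUstar
      have hUsopen : IsOpen Ustar := isOpen_iUnion hUo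
      have hUsfw : ∀ a ∈ D, a ∈ Ustar → I a ∈ Ustar := by
        intro a haD h
        obtain ⟨z, hz⟩ := Set.mem_iUnion.mp h
        exact Set.mem_iUnion.mpr ⟨z, hUfw z a haD hz⟩
      have hUsbw : ∀ a ∈ D, I a ∈ Ustar → a ∈ Ustar := by
        intro a haD h
        obtain ⟨z, hz⟩ := Set.mem_iUnion.mp h
        exact Set.mem_iUnion.mpr ⟨z, hUbw z a haD hz⟩
      have hsatStar : ∀ z u : X, Relation.EqvGen (ImpulseRel D I) z u →
          (z ∈ Ustar ↔ u ∈ Ustar) := fun z u h => mem_iff_of_eqvGen hUsfw hUsbw h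
      have hpre : π ⁻¹' (π '' Ustar) = Ustar := by
        ext z
        simp only [Set.mem_preimage, Set.mem_image]
        constructor
        · rintro ⟨u, hu, heq⟩
          exact (hsatStar z u (Quotient.exact heq.symm)).mpr hu
        · exact fun hz => ⟨z, hz, rfl⟩
      refine isOpen_induced_iff.mpr ⟨π '' Ustar, ?_, ?_⟩
      · rw [← (isQuotientMap_quotient_mk' (s := st)).isOpen_preimage]
        show IsOpen (π ⁻¹' (π '' Ustar))
        rw [hpre]; exact hUsopen
      · ext ⟨p, hp⟩
        obtain ⟨x, hx, rfl⟩ := hp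
        simp only [Set.mem_preimage, Set.mem_image]
        constructor
        · rintro ⟨u, hu, heq⟩
          have hxU : x ∈ Ustar := (hsatStar x u (Quotient.exact heq.symm)).mpr hu
          obtain ⟨z, hz⟩ := Set.mem_iUnion.mp hxU
          have hxN : x ∈ N' := hUΩ z ⟨hz, hx⟩
          show F (π x) ∈ O
          rw [hFmk x hx]
          exact (hmemN' x hx).mp hxN
        · intro hFO
          have hqO : qM ⟨x, hx⟩ ∈ O := by
            rw [← hFmk x hx]; exact hFO
          exact ⟨x, Set.mem_iUnion.mpr ⟨⟨⟨x, hx⟩, hqO⟩, hUm ⟨⟨x, hx⟩, hqO⟩⟩, rfl⟩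
    haveI : CompactSpace ↥Ω := isCompact_iff_compactSpace.mp hΩcomp
    haveI hT2M : T2Space M := t2_quotR hΩcomp hD hI hID'
    haveI hSCM : SecondCountableTopology M := secondCountable_quotR hΩcomp hD hI hID'
    haveI : CompactSpace M := Quotient.compactSpace
    haveI hMet : TopologicalSpace.MetrizableSpace M := by infer_instance
    haveI : CompactSpace ↥(π '' Ω) := isCompact_iff_compactSpace.mp hScomp
    have hemb := hcont.isClosedEmbedding hinj
    haveI : T2Space ↥(π '' Ω) := hemb.toIsEmbedding.t2Space
    exact ⟨hScomp, inferInstance, hemb.toIsEmbedding.metrizableSpace⟩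
end

section
/- For an impulsive dynamical system (X, φ̄, D, I) with I(Ω_φ ∩ D) ⊂ Ω_φ \ D, the restriction of the quotient projection π to Ω_φ \ D is a continuous bijection onto π(Ω_φ), and the image of any Borel subset of Ω_φ \ D under π is a Borel subset of π(Ω_φ). -/
open Set Filter Topology MeasureTheory Function
open scoped NNReal ENNReal

namespace Stmt14Aux

open Relation

variable {X : Type*} (D : Set X) (g : X → X)

/-- One step of the impulsive identification: `x ∈ D` jumps to `g x`. -/
def IStep (x y : X) : Prop := x ∈ D ∧ y = g x

variable {D g}

lemma iStep_rightUnique : Relator.RightUnique (IStep D g) :=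
  fun _ _ _ hb hc => hb.2.trans hc.2.symm

lemma iStep_eqvGen {x y : X} (h : IStep D g x y) : EqvGen (ImpulseRel D g) x y :=
  EqvGen.rel _ _ (Or.inr (Or.inl ⟨h.1, h.2⟩))

lemma reach_eqvGen {x y : X} (h : ReflTransGen (IStep D g) x y) :
    EqvGen (ImpulseRel D g) x y := by
  induction h with
  | refl => exact EqvGen.refl _
  | tail _ h ih => exact EqvGen.trans _ _ _ ih (iStep_eqvGen h)

lemma reach_total {x a b : X} (ha : ReflTransGen (IStep D g) x a)
    (hb : ReflTransGen (IStep D g) x b) :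
    ReflTransGen (IStep D g) a b ∨ ReflTransGen (IStep D g) b a :=
  ReflTransGen.total_of_right_unique iStep_rightUnique ha hb

lemma reach_of_not_mem {a b : X} (hb : ReflTransGen (IStep D g) b a) (h : b ∉ D) : a = b := by
  rcases hb.cases_head with h' | ⟨c, hc, -⟩
  · exact h'.symm
  · exact absurd hc.1 h

lemma eqvGen_iff {x y : X} :
    EqvGen (ImpulseRel D g) x y ↔ Join (ReflTransGen (IStep D g)) x y := by
  constructor
  · intro h
    induction h with
    | rel a b h =>
      rcases h with rfl | ⟨hD, rfl⟩ | ⟨hD, rfl⟩ | ⟨haD, hbD, hIab⟩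
      · exact ⟨a, .refl, .refl⟩
      · exact ⟨g a, .single ⟨hD, rfl⟩, .refl⟩
      · exact ⟨g b, .refl, .single ⟨hD, rfl⟩⟩
      · exact ⟨g a, .single ⟨haD, rfl⟩, .single ⟨hbD, hIab⟩⟩
    | refl => exact ⟨_, .refl, .refl⟩
    | symm a b _ ih => exact ⟨ih.choose, ih.choose_spec.2, ih.choose_spec.1⟩
    | trans a b c _ _ ih1 ih2 =>
      obtain ⟨z1, haz, hbz⟩ := ih1
      obtain ⟨z2, hbz2, hcz2⟩ := ih2
      rcases reach_total hbz hbz2 with h | h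
      · exact ⟨z2, haz.trans h, hcz2⟩
      · exact ⟨z1, haz, hcz2.trans h⟩
  · rintro ⟨z, hxz, hyz⟩
    exact EqvGen.trans _ _ _ (reach_eqvGen hxz) (EqvGen.symm _ _ (reach_eqvGen hyz))

lemma exit_unique {x a b : X} (ha : ReflTransGen (IStep D g) x a)
    (hb : ReflTransGen (IStep D g) x b) (haD : a ∉ D) (hbD : b ∉ D) : a = b := by
  rcases reach_total ha hb with h | h
  · exact (reach_of_not_mem h haD).symm
  · exact reach_of_not_mem h hbD

lemma eqvGen_eq_of_not_mem {x y : X} (h : EqvGen (ImpulseRel D g) x y)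
    (hx : x ∉ D) (hy : y ∉ D) : x = y := by
  obtain ⟨z, hxz, hyz⟩ := eqvGen_iff.mp h
  rw [← reach_of_not_mem hxz hx, ← reach_of_not_mem hyz hy]

variable (D g)

/-- points whose first `n` iterates stay in `D`. -/
def ICn (n : ℕ) : Set X := {x | ∀ j < n, g^[j] x ∈ D}

/-- points whose orbit stays in `D` for `n` steps and then lands in `B`. -/
def IFn (n : ℕ) (B : Set X) : Set X := {x | x ∈ ICn D g n ∧ g^[n] x ∈ B}

/-- the saturation of `B` by backward chains. -/
def ISat (B : Set X) : Set X := ⋃ n, IFn D g n B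

/-- points whose whole forward orbit stays in `D`. -/
def IPinf : Set X := {x | ∀ j, g^[j] x ∈ D}

variable {D g}

lemma iCn_antitone {m n : ℕ} (h : m ≤ n) : ICn D g n ⊆ ICn D g m :=
  fun _ hx j hj => hx j (lt_of_lt_of_le hj h)

lemma chain_reach {n : ℕ} {x : X} (h : x ∈ ICn D g n) :
    ReflTransGen (IStep D g) x (g^[n] x) := by
  induction n generalizing x with
  | zero => simpa using ReflTransGen.refl
  | succ n ih =>
    have hx : x ∈ D := h 0 (Nat.succ_pos n)
    have hgx : g x ∈ ICn D g n := fun j hj => by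
      rw [← Function.iterate_succ_apply]
      exact h (j + 1) (Nat.succ_lt_succ hj)
    have h2 := ih hgx
    rw [← Function.iterate_succ_apply] at h2
    exact ReflTransGen.head ⟨hx, rfl⟩ h2

lemma reach_chain {x b : X} (h : ReflTransGen (IStep D g) x b) :
    ∃ n, x ∈ ICn D g n ∧ g^[n] x = b := by
  induction h using ReflTransGen.head_induction_on with
  | refl => exact ⟨0, fun j hj => absurd hj (Nat.not_lt_zero j), rfl⟩
  | head hstep _ ih =>
    obtain ⟨n, hc, hb⟩ := ih
    refine ⟨n + 1, fun j hj => ?_, ?_⟩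
    · cases j with
      | zero => simpa using hstep.1
      | succ k =>
        rw [Function.iterate_succ_apply, ← hstep.2]
        exact hc k (Nat.lt_of_succ_lt_succ hj)
    · rw [Function.iterate_succ_apply, ← hstep.2, hb]

lemma mem_iSat_iff {B : Set X} {x : X} :
    x ∈ ISat D g B ↔ ∃ b ∈ B, ReflTransGen (IStep D g) x b := by
  constructor
  · rintro ⟨_, ⟨n, rfl⟩, hc, hb⟩
    exact ⟨g^[n] x, hb, chain_reach hc⟩
  · rintro ⟨b, hb, h⟩
    obtain ⟨n, hc, rfl⟩ := reach_chain h
    exact ⟨_, ⟨n, rfl⟩, hc, hb⟩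

lemma subset_iSat {B : Set X} : B ⊆ ISat D g B :=
  fun x hx => mem_iSat_iff.mpr ⟨x, hx, ReflTransGen.refl⟩

lemma iSat_iUnion {B : ℕ → Set X} : ISat D g (⋃ i, B i) = ⋃ i, ISat D g (B i) := by
  ext x
  simp only [mem_iUnion, mem_iSat_iff]
  constructor
  · rintro ⟨b, ⟨i, hbi⟩, hr⟩
    exact ⟨i, b, hbi, hr⟩
  · rintro ⟨i, b, hb, hr⟩
    exact ⟨b, ⟨i, hb⟩, hr⟩

lemma iSat_empty : ISat D g (∅ : Set X) = ∅ := by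
  ext x
  simp [mem_iSat_iff]

/-- saturation property of `ISat B` for `B` disjoint from `D`. -/
lemma mem_iSat_of_eqvGen {B : Set X} (hB : B ⊆ Dᶜ) {x y : X}
    (h : EqvGen (ImpulseRel D g) x y) (hy : y ∈ ISat D g B) : x ∈ ISat D g B := by
  obtain ⟨z, hxz, hyz⟩ := eqvGen_iff.mp h
  obtain ⟨b, hb, hyb⟩ := mem_iSat_iff.mp hy
  have hzb : ReflTransGen (IStep D g) z b := by
    rcases reach_total hyz hyb with h' | h'
    · exact h'
    · exact (reach_of_not_mem h' (hB hb)) ▸ ReflTransGen.refl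
  exact mem_iSat_iff.mpr ⟨b, hb, hxz.trans hzb⟩

lemma iPinf_mem_g {x : X} (hx : x ∈ IPinf D g) : g x ∈ IPinf D g := fun j => by
  rw [← Function.iterate_succ_apply]
  exact hx (j + 1)

lemma iPinf_mem_of_iStep {x y : X} (h : IStep D g x y) (hy : y ∈ IPinf D g) :
    x ∈ IPinf D g := by
  intro j
  cases j with
  | zero => simpa using h.1
  | succ k =>
    rw [Function.iterate_succ_apply, ← h.2]
    exact hy k

lemma mem_iPinf_of_eqvGen {x y : X} (h : EqvGen (ImpulseRel D g) x y)
    (hy : y ∈ IPinf D g) : x ∈ IPinf D g := by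
  obtain ⟨z, hxz, hyz⟩ := eqvGen_iff.mp h
  have hz : z ∈ IPinf D g := by
    clear hxz
    induction hyz with
    | refl => exact hy
    | tail _ hstep ih => exact hstep.2 ▸ iPinf_mem_g ih
  clear hyz h
  induction hxz using ReflTransGen.head_induction_on with
  | refl => exact hz
  | head hstep _ ih => exact iPinf_mem_of_iStep hstep ih

lemma iSat_disjoint_iPinf {B : Set X} (hB : B ⊆ Dᶜ) {x : X}
    (h1 : x ∈ ISat D g B) (h2 : x ∈ IPinf D g) : False := by
  obtain ⟨_, ⟨n, rfl⟩, _, hb⟩ := h1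
  exact hB hb (h2 n)

lemma iSat_compl_eq : ISat D g Dᶜ = (IPinf D g)ᶜ := by
  ext x
  constructor
  · rintro ⟨_, ⟨n, rfl⟩, _, hb⟩ hp
    exact hb (hp n)
  · intro hp
    classical
    have h : ∃ j, g^[j] x ∉ D := by
      by_contra h
      push_neg at h
      exact hp h
    refine ⟨_, ⟨Nat.find h, rfl⟩, fun j hj => ?_, Nat.find_spec h⟩
    by_contra hj'
    exact Nat.lt_irrefl _ (lt_of_lt_of_le hj (Nat.find_le hj'))

section Topo

variable [TopologicalSpace X]

lemma iCn_closed_cont (hD : IsClosed D) (hg : ContinuousOn g D) (n : ℕ) :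
    IsClosed (ICn D g n) ∧ ContinuousOn (g^[n]) (ICn D g n) := by
  induction n with
  | zero =>
    constructor
    · have : ICn D g 0 = univ := by
        ext x; simp [ICn]
      rw [this]; exact isClosed_univ
    · simpa using continuousOn_id
  | succ n ih =>
    have hset : ICn D g (n + 1) = ICn D g n ∩ g^[n] ⁻¹' D := by
      ext x
      constructor
      · intro h
        exact ⟨fun j hj => h j (hj.trans (Nat.lt_succ_self n)), h n (Nat.lt_succ_self n)⟩
      · rintro ⟨h1, h2⟩ j hj
        rcases Nat.lt_succ_iff_lt_or_eq.mp hj with hj' | rfl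
        · exact h1 j hj'
        · exact h2
    constructor
    · rw [hset]
      exact ih.2.preimage_isClosed_of_isClosed ih.1 hD
    · rw [Function.iterate_succ']
      refine ContinuousOn.comp hg ?_ ?_
      · exact ih.2.mono (by rw [hset]; exact inter_subset_left)
      · intro x hx
        exact hx n (Nat.lt_succ_self n)

lemma isClosed_iFn (hD : IsClosed D) (hg : ContinuousOn g D) {B : Set X} (hB : IsClosed B)
    (n : ℕ) : IsClosed (IFn D g n B) :=
  (iCn_closed_cont hD hg n).2.preimage_isClosed_of_isClosed (iCn_closed_cont hD hg n).1 hB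

lemma isClosed_iPinf (hD : IsClosed D) (hg : ContinuousOn g D) :
    IsClosed (IPinf D g) := by
  have : IPinf D g = ⋂ n, ICn D g n := by
    ext x
    constructor
    · exact fun h => mem_iInter.mpr fun n j _ => h j
    · exact fun h j => mem_iInter.mp h (j + 1) j (Nat.lt_succ_self j)
  rw [this]
  exact isClosed_iInter fun n => (iCn_closed_cont hD hg n).1

lemma closure_iSat_subset (hD : IsClosed D) (hg : ContinuousOn g D) {B : Set X}
    (hB : IsClosed B) : closure (ISat D g B) ⊆ ISat D g B ∪ IPinf D g := by
  intro x hx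
  rw [mem_union]
  by_contra hcon
  push_neg at hcon
  obtain ⟨hs, hp⟩ := hcon
  obtain ⟨N, hN⟩ : ∃ N, x ∉ ICn D g N := by
    by_contra h
    push_neg at h
    exact hp fun j => h (j + 1) j (Nat.lt_succ_self j)
  have hVopen : IsOpen ((ICn D g N)ᶜ ∩ ⋂ j ∈ Finset.range N, (IFn D g j B)ᶜ) := by
    refine IsOpen.inter (iCn_closed_cont hD hg N).1.isOpen_compl ?_
    exact isOpen_biInter_finset fun j _ => (isClosed_iFn hD hg hB j).isOpen_compl
  have hxV : x ∈ (ICn D g N)ᶜ ∩ ⋂ j ∈ Finset.range N, (IFn D g j B)ᶜ := by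
    refine ⟨hN, mem_iInter₂.mpr fun j _ => fun hj => hs (mem_iUnion.mpr ⟨j, hj⟩)⟩
  obtain ⟨y, hyV, hySat⟩ := mem_closure_iff.mp hx _ hVopen hxV
  obtain ⟨n', hn'⟩ := mem_iUnion.mp hySat
  rcases lt_or_ge n' N with h | h
  · exact (mem_iInter₂.mp hyV.2 n' (Finset.mem_range.mpr h)) hn'
  · exact hyV.1 (iCn_antitone h hn'.1)

end Topo

end Stmt14Aux

/-- Under `I(Ω_φ ∩ D) ⊆ Ω_φ \ D`, the quotient projection `π` restricted to `Ω_φ \ D`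
is a continuous injection with `π(Ω_φ \ D) = π(Ω_φ)`, and the image under `π` of any
Borel subset of `Ω_φ \ D` is a Borel subset of the quotient. -/
theorem stmt14 {X : Type*} [MetricSpace X] [CompactSpace X]
    [MeasurableSpace X] [BorelSpace X]
    (φb : ℝ≥0 → X → X) (D : Set X) (I : X → X) (φ : ℝ≥0 → X → X)
    (hφb : IsSemiflow φb) (hc : Continuous fun p : ℝ≥0 × X => φb p.1 p.2)
    (hD : IsCompact D) (hI : ContinuousOn I D)
    (hpos : ∀ x, 0 < ImpulsiveTau φb D x)
    (hφ : IsImpulsiveSemiflow φb D I φ)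
    (hID : I '' (NonWanderingSet φ ∩ D) ⊆ NonWanderingSet φ \ D) :
    ContinuousOn (Quotient.mk (Relation.EqvGen.setoid (ImpulseRel D I)))
        (NonWanderingSet φ \ D) ∧
    InjOn (Quotient.mk (Relation.EqvGen.setoid (ImpulseRel D I))) (NonWanderingSet φ \ D) ∧
    Quotient.mk (Relation.EqvGen.setoid (ImpulseRel D I)) '' (NonWanderingSet φ \ D) =
      Quotient.mk (Relation.EqvGen.setoid (ImpulseRel D I)) '' NonWanderingSet φ ∧
    ∀ A : Set X, A ⊆ NonWanderingSet φ \ D → MeasurableSet A →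
      MeasurableSet[borel (Quotient (Relation.EqvGen.setoid (ImpulseRel D I)))]
        (Quotient.mk (Relation.EqvGen.setoid (ImpulseRel D I)) '' A) := by
  classical
  have hDc : IsClosed D := hD.isClosed
  set π : X → Quotient (Relation.EqvGen.setoid (ImpulseRel D I)) :=
    Quotient.mk (Relation.EqvGen.setoid (ImpulseRel D I)) with hπdef
  -- basic quotient facts
  have hexact : ∀ {x y : X}, π x = π y → Relation.EqvGen (ImpulseRel D I) x y := by
    intro x y h
    exact Quotient.eq.mp h
  have hsound : ∀ {x y : X}, Relation.EqvGen (ImpulseRel D I) x y → π x = π y := by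
    intro x y h
    exact Quotient.eq.mpr h
  have hcont : Continuous π := continuous_quot_mk
  have hqm : IsQuotientMap π := isQuotientMap_quot_mk
  refine ⟨hcont.continuousOn, ?_, ?_, ?_⟩
  · -- injectivity
    intro x hx y hy hxy
    exact Stmt14Aux.eqvGen_eq_of_not_mem (hexact hxy) hx.2 hy.2
  · -- image equality
    apply subset_antisymm (image_mono diff_subset)
    rintro _ ⟨x, hx, rfl⟩
    by_cases hxD : x ∈ D
    · have h1 : I x ∈ NonWanderingSet φ \ D := hID ⟨x, ⟨hx, hxD⟩, rfl⟩
      refine ⟨I x, h1, ?_⟩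
      exact (hsound (Relation.EqvGen.rel _ _ (Or.inr (Or.inl ⟨hxD, rfl⟩)))).symm
    · exact ⟨x, ⟨hx, hxD⟩, rfl⟩
  · -- Borel images
    intro A hA hAm
    have hAB : MeasurableSet[borel X] A := by
      have := @BorelSpace.measurable_eq X _ _ _
      rwa [← this]
    -- saturated sets have saturated preimages
    have hsat_pre : ∀ S : Set X,
        (∀ x y : X, Relation.EqvGen (ImpulseRel D I) x y → y ∈ S → x ∈ S) →
        π ⁻¹' (π '' S) = S := by
      intro S hS
      ext x
      constructor
      · rintro ⟨y, hy, hxy⟩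
        exact hS x y (hexact hxy.symm) hy
      · intro hx
        exact ⟨x, hx, rfl⟩
    -- open / closed saturated sets give measurable images
    have hopen : ∀ V : Set (Quotient (Relation.EqvGen.setoid (ImpulseRel D I))),
        IsOpen (π ⁻¹' V) → MeasurableSet[borel _] V := by
      intro V hV
      exact MeasurableSpace.measurableSet_generateFrom (hqm.isOpen_preimage.mp hV)
    have hmeas_sat_closed : ∀ S : Set X,
        (∀ x y : X, Relation.EqvGen (ImpulseRel D I) x y → y ∈ S → x ∈ S) →
        IsClosed S → MeasurableSet[borel _] (π '' S) := by
      intro S hS hSc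
      have h1 : IsOpen (π ⁻¹' (π '' S)ᶜ) := by
        rw [preimage_compl, hsat_pre S hS]
        exact hSc.isOpen_compl
      have h2 := (hopen _ h1).compl
      rwa [compl_compl] at h2
    have hmeas_sat_open : ∀ S : Set X,
        (∀ x y : X, Relation.EqvGen (ImpulseRel D I) x y → y ∈ S → x ∈ S) →
        IsOpen S → MeasurableSet[borel _] (π '' S) := by
      intro S hS hSo
      refine hopen _ ?_
      rw [hsat_pre S hS]
      exact hSo
    -- the set of points whose whole orbit stays in D
    have hPinf_sat : ∀ x y : X, Relation.EqvGen (ImpulseRel D I) x y →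
        y ∈ Stmt14Aux.IPinf D I → x ∈ Stmt14Aux.IPinf D I :=
      fun x y h hy => Stmt14Aux.mem_iPinf_of_eqvGen h hy
    have hPinf_closed : IsClosed (Stmt14Aux.IPinf D I) := Stmt14Aux.isClosed_iPinf hDc hI
    have hPinf_meas : MeasurableSet[borel _] (π '' Stmt14Aux.IPinf D I) :=
      hmeas_sat_closed _ hPinf_sat hPinf_closed
    have hPinfc_sat : ∀ x y : X, Relation.EqvGen (ImpulseRel D I) x y →
        y ∈ (Stmt14Aux.IPinf D I)ᶜ → x ∈ (Stmt14Aux.IPinf D I)ᶜ := by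
      intro x y h hy hx
      exact hy (hPinf_sat y x (Relation.EqvGen.symm _ _ h) hx)
    have hG_meas : MeasurableSet[borel _] (π '' (Stmt14Aux.IPinf D I)ᶜ) :=
      hmeas_sat_open _ hPinfc_sat hPinf_closed.isOpen_compl
    -- measurability of the image of the saturation of a closed set disjoint from D
    have hmeas_closed_piece : ∀ B : Set X, B ⊆ Dᶜ → IsClosed B →
        MeasurableSet[borel _] (π '' Stmt14Aux.ISat D I B) := by
      intro B hB hBc
      have hsatB : ∀ x y : X, Relation.EqvGen (ImpulseRel D I) x y →
          y ∈ Stmt14Aux.ISat D I B → x ∈ Stmt14Aux.ISat D I B :=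
        fun x y h hy => Stmt14Aux.mem_iSat_of_eqvGen hB h hy
      set T := Stmt14Aux.ISat D I B ∪ Stmt14Aux.IPinf D I with hT
      have hTc : IsClosed T := by
        refine isClosed_of_closure_subset ?_
        rw [hT, closure_union, hPinf_closed.closure_eq]
        exact union_subset_union_left _ (Stmt14Aux.closure_iSat_subset hDc hI hBc) |>.trans
          (by rw [union_assoc, union_self])
      have hTsat : ∀ x y : X, Relation.EqvGen (ImpulseRel D I) x y → y ∈ T → x ∈ T := by
        intro x y h hy
        rcases hy with hy | hy
        · exact Or.inl (hsatB x y h hy)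
        · exact Or.inr (hPinf_sat x y h hy)
      have hT_meas : MeasurableSet[borel _] (π '' T) := hmeas_sat_closed _ hTsat hTc
      have himg : π '' Stmt14Aux.ISat D I B = π '' T \ π '' Stmt14Aux.IPinf D I := by
        apply subset_antisymm
        · rintro _ ⟨x, hx, rfl⟩
          refine ⟨⟨x, Or.inl hx, rfl⟩, ?_⟩
          rintro ⟨p, hp, hpx⟩
          exact Stmt14Aux.iSat_disjoint_iPinf hB hx (hPinf_sat x p (hexact hpx.symm) hp)
        · rintro _ ⟨⟨t, ht, rfl⟩, hnot⟩
          rcases ht with ht | ht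
          · exact ⟨t, ht, rfl⟩
          · exact absurd ⟨t, ht, rfl⟩ hnot
      rw [himg]
      exact hT_meas.diff hPinf_meas
    -- a σ-algebra of sets with measurable saturated images
    let m : MeasurableSpace X :=
      { MeasurableSet' := fun A =>
          MeasurableSet[borel _] (π '' Stmt14Aux.ISat D I (A ∩ Dᶜ))
        measurableSet_empty := by
          simp only [empty_inter, Stmt14Aux.iSat_empty, image_empty]
          exact @MeasurableSet.empty _ (borel _)
        measurableSet_compl := by
          intro A hAmeas
          have hkey : ∀ B : Set X, B ⊆ Dᶜ →
              π '' Stmt14Aux.ISat D I (Dᶜ \ B) =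
                π '' Stmt14Aux.ISat D I Dᶜ \ π '' Stmt14Aux.ISat D I B := by
            intro B hB
            apply subset_antisymm
            · rintro _ ⟨x, hx, rfl⟩
              obtain ⟨b, ⟨hbD, hbB⟩, hr⟩ := Stmt14Aux.mem_iSat_iff.mp hx
              refine ⟨⟨x, Stmt14Aux.mem_iSat_iff.mpr ⟨b, hbD, hr⟩, rfl⟩, ?_⟩
              rintro ⟨y, hy, hyx⟩
              have hx' : x ∈ Stmt14Aux.ISat D I B :=
                Stmt14Aux.mem_iSat_of_eqvGen hB (hexact hyx.symm) hy
              obtain ⟨b', hb', hr'⟩ := Stmt14Aux.mem_iSat_iff.mp hx'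
              exact hbB (Stmt14Aux.exit_unique hr hr' hbD (hB hb') ▸ hb')
            · rintro _ ⟨⟨x, hx, rfl⟩, hnot⟩
              obtain ⟨b, hbD, hr⟩ := Stmt14Aux.mem_iSat_iff.mp hx
              by_cases hbB : b ∈ B
              · exact absurd ⟨x, Stmt14Aux.mem_iSat_iff.mpr ⟨b, hbB, hr⟩, rfl⟩ hnot
              · exact ⟨x, Stmt14Aux.mem_iSat_iff.mpr ⟨b, ⟨hbD, hbB⟩, hr⟩, rfl⟩
          have hset : Aᶜ ∩ Dᶜ = Dᶜ \ (A ∩ Dᶜ) := by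
            ext x
            simp only [mem_inter_iff, mem_compl_iff, mem_diff, not_and]
            tauto
          rw [hset, hkey _ inter_subset_right, Stmt14Aux.iSat_compl_eq]
          exact hG_meas.diff hAmeas
        measurableSet_iUnion := by
          intro f hf
          have : (⋃ i, f i) ∩ Dᶜ = ⋃ i, (f i ∩ Dᶜ) := iUnion_inter _ _
          rw [this, Stmt14Aux.iSat_iUnion, image_iUnion]
          exact MeasurableSet.iUnion hf }
    -- every Borel set of X is in m
    have hle : (borel X) ≤ m := by
      refine MeasurableSpace.generateFrom_le ?_
      intro U hU
      show MeasurableSet[m] U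
      obtain ⟨F, hFc, hFU, hFeq, -⟩ := (hU.inter hDc.isOpen_compl).exists_iUnion_isClosed
      show MeasurableSet[borel _] (π '' Stmt14Aux.ISat D I (U ∩ Dᶜ))
      rw [← hFeq, Stmt14Aux.iSat_iUnion, image_iUnion]
      refine MeasurableSet.iUnion fun n => ?_
      exact hmeas_closed_piece (F n) ((hFU n).trans inter_subset_right) (hFc n)
    -- conclude
    have hAm' : MeasurableSet[m] A := hle _ hAB
    have hAD : A ∩ Dᶜ = A := inter_eq_self_of_subset_left fun x hx => (hA hx).2
    have hAsat : π '' A = π '' Stmt14Aux.ISat D I A := by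
      apply subset_antisymm (image_mono Stmt14Aux.subset_iSat)
      rintro _ ⟨x, hx, rfl⟩
      obtain ⟨b, hbA, hr⟩ := Stmt14Aux.mem_iSat_iff.mp hx
      exact ⟨b, hbA, (hsound (Stmt14Aux.reach_eqvGen hr)).symm⟩
    rw [hAsat]
    have := hAm'
    show MeasurableSet[borel _] (π '' Stmt14Aux.ISat D I A)
    rw [← hAD]
    exact this
end

section
/- Let φ be the semiflow of an impulsive dynamical system (X, φ̄, D, I) with τ_D continuous and I(Ω_φ ∩ D) ⊂ Ω_φ \ D. Then any φ-invariant Borel probability measure μ satisfies μ(D) = 0. -/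
open Set Filter Topology MeasureTheory Function
open scoped NNReal ENNReal Classical

/-- A set whose outer measure and that of its complement add up to the total mass is
null-measurable. -/
lemma nullMeasurableSet_of_add_compl {X : Type*} [MeasurableSpace X] (μ : Measure X)
    [IsFiniteMeasure μ] {B : Set X} (h : μ B + μ Bᶜ = μ Set.univ) :
    NullMeasurableSet B μ := by
  set H := toMeasurable μ B with hHdef
  set H' := toMeasurable μ Bᶜ with hH'def
  have hBH : B ⊆ H := subset_toMeasurable μ B
  have hBH' : Bᶜ ⊆ H' := subset_toMeasurable μ Bᶜ
  have hmH' : MeasurableSet H' := measurableSet_toMeasurable μ Bᶜ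
  have hμH : μ H = μ B := measure_toMeasurable B
  have hμH' : μ H' = μ Bᶜ := measure_toMeasurable Bᶜ
  have hu : H ∪ H' = Set.univ := by
    apply Set.eq_univ_of_univ_subset
    intro x _
    by_cases hx : x ∈ B
    · exact Or.inl (hBH hx)
    · exact Or.inr (hBH' hx)
  have hinter : μ (H ∩ H') = 0 := by
    have h1 : μ (H ∪ H') + μ (H ∩ H') = μ H + μ H' := measure_union_add_inter H hmH'
    rw [hu, hμH, hμH', h] at h1
    have h2 : μ Set.univ + μ (H ∩ H') = μ Set.univ + 0 := by
      rw [add_zero]; exact h1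
    exact (ENNReal.add_right_inj (measure_ne_top μ Set.univ)).mp h2
  -- B = H'ᶜ ∪ (B ∩ H'), with H'ᶜ measurable and B ∩ H' null.
  have hBeq : B = H'ᶜ ∪ (B ∩ H') := by
    ext x
    simp only [Set.mem_union, Set.mem_inter_iff, Set.mem_compl_iff]
    constructor
    · intro hx
      by_cases hx' : x ∈ H'
      · exact Or.inr ⟨hx, hx'⟩
      · exact Or.inl hx'
    · rintro (hx | hx)
      · by_contra hxB
        exact hx (hBH' hxB)
      · exact hx.1
  rw [hBeq]
  refine (hmH'.compl.nullMeasurableSet).union (NullMeasurableSet.of_null ?_)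
  exact measure_mono_null (fun x hx => Set.mem_inter (hBH hx.1) hx.2) hinter

/-- Key lemma: for every `ε > 0`, the set of points of `D` whose base trajectory avoids
`D` during `(0, ε)` has measure zero for any `φ`-invariant probability measure. -/
lemma measure_slice_zero {X : Type*} [MetricSpace X] [CompactSpace X]
    [MeasurableSpace X] [BorelSpace X]
    (φb : ℝ≥0 → X → X) (D : Set X) (φ : ℝ≥0 → X → X)
    (hc : Continuous fun p : ℝ≥0 × X => φb p.1 p.2)
    (hD : IsCompact D)
    (hsemi : ∀ (s t : ℝ≥0) (x : X), φ (t + s) x = φ t (φ s x))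
    (hbefore : ∀ x, ∀ t : ℝ≥0, (t : ℝ≥0∞) < ImpulsiveTau φb D x → φ t x = φb t x)
    (μ : Measure X) [IsProbabilityMeasure μ]
    (hinv : ∀ t : ℝ≥0, ∀ A : Set X, MeasurableSet A → μ (φ t ⁻¹' A) = μ A)
    (ε : ℝ≥0) (hε : 0 < ε) :
    μ {x | x ∈ D ∧ ∀ t : ℝ≥0, 0 < t → t < ε → φb t x ∉ D} = 0 := by
  set S := {x | x ∈ D ∧ ∀ t : ℝ≥0, 0 < t → t < ε → φb t x ∉ D} with hSdef
  -- Measurability of S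
  have hmS : MeasurableSet S := by
    set K : ℕ → Set X := fun m =>
      Prod.snd '' ((Set.Icc (ε / ((m : ℝ≥0) + 2)) (ε - ε / ((m : ℝ≥0) + 2)) ×ˢ
        (Set.univ : Set X)) ∩ ((fun p : ℝ≥0 × X => φb p.1 p.2) ⁻¹' D)) with hKdef
    have hKclosed : ∀ m, IsClosed (K m) := by
      intro m
      have hcomp : IsCompact ((Set.Icc (ε / ((m : ℝ≥0) + 2)) (ε - ε / ((m : ℝ≥0) + 2)) ×ˢ
          (Set.univ : Set X)) ∩ ((fun p : ℝ≥0 × X => φb p.1 p.2) ⁻¹' D)) :=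
        (isCompact_Icc.prod isCompact_univ).inter_right (hD.isClosed.preimage hc)
      exact (hcomp.image continuous_snd).isClosed
    have hSeq : S = D ∩ (⋃ m : ℕ, K m)ᶜ := by
      ext x
      constructor
      · rintro ⟨hxD, hgood⟩
        refine ⟨hxD, ?_⟩
        intro hx
        rcases Set.mem_iUnion.mp hx with ⟨m, hm⟩
        rcases hm with ⟨⟨t, y⟩, ⟨⟨⟨ht1, ht2⟩, -⟩, htD⟩, rfl⟩
        have hm2 : (0 : ℝ≥0) < ε / ((m : ℝ≥0) + 2) := by positivity
        have ht0 : 0 < t := lt_of_lt_of_le hm2 ht1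
        have htε : t < ε := lt_of_le_of_lt ht2 (tsub_lt_self hε hm2)
        exact hgood t ht0 htε htD
      · rintro ⟨hxD, hx⟩
        refine ⟨hxD, ?_⟩
        intro t ht0 htε hcon
        apply hx
        -- find m with ε/(m+2) ≤ min t (ε - t)
        have hrpos : 0 < min t (ε - t) := lt_min ht0 (tsub_pos_of_lt htε)
        obtain ⟨m, hm⟩ := exists_nat_gt (ε / min t (ε - t))
        have hmle : ε / ((m : ℝ≥0) + 2) ≤ min t (ε - t) := by
          rw [div_le_iff₀ (by positivity)]
          have h1 : ε < (m : ℝ≥0) * min t (ε - t) := (div_lt_iff₀ hrpos).mp hm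
          calc ε ≤ (m : ℝ≥0) * min t (ε - t) := h1.le
            _ = min t (ε - t) * (m : ℝ≥0) := mul_comm _ _
            _ ≤ min t (ε - t) * ((m : ℝ≥0) + 2) := mul_le_mul_right le_self_add _
        refine Set.mem_iUnion.mpr ⟨m, ⟨(t, x), ⟨⟨⟨?_, ?_⟩, Set.mem_univ _⟩, hcon⟩, rfl⟩⟩
        · exact hmle.trans (min_le_left _ _)
        · have h2 : ε / ((m : ℝ≥0) + 2) ≤ ε - t := hmle.trans (min_le_right _ _)
          have h3 : t + ε / ((m : ℝ≥0) + 2) ≤ ε := by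
            calc t + ε / ((m : ℝ≥0) + 2) ≤ t + (ε - t) := add_le_add_right h2 t
              _ = ε := add_tsub_cancel_of_le htε.le
          exact (le_tsub_iff_right (h2.trans tsub_le_self)).mpr h3
    rw [hSeq]
    exact hD.isClosed.measurableSet.inter
      (MeasurableSet.compl (MeasurableSet.iUnion fun m => (hKclosed m).measurableSet))
  -- Key dynamical fact: points of S do not return to D before time ε under φ
  have key : ∀ y ∈ S, ∀ s : ℝ≥0, 0 < s → s < ε → φ s y ∉ D := by
    intro y hy s hs0 hsε
    have hτ : (ε : ℝ≥0∞) ≤ ImpulsiveTau φb D y := by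
      apply le_sInf
      rintro _ ⟨u, ⟨hu0, huD⟩, rfl⟩
      by_contra hlt
      push_neg at hlt
      have huε : u < ε := by exact_mod_cast hlt
      exact hy.2 u hu0 huε huD
    have hlt : (s : ℝ≥0∞) < ImpulsiveTau φb D y :=
      lt_of_lt_of_le (by exact_mod_cast hsε) hτ
    rw [hbefore y s hlt]
    exact hy.2 s hs0 hsε
  -- For each N, build N disjoint preimages of S, each of measure μ S
  have hbound : ∀ N : ℕ, (N : ℝ≥0∞) * μ S ≤ 1 := by
    intro N
    set δ : ℝ≥0 := ε / ((N : ℝ≥0) + 1) with hδdef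
    have hδpos : 0 < δ := by positivity
    set tm : ℕ → ℝ≥0 := fun k => ((k : ℝ≥0) + 1) * δ with htmdef
    set E : ℕ → Set X := fun k => φ (tm k) ⁻¹' S with hEdef
    have hμE : ∀ k, μ (E k) = μ S := fun k => hinv (tm k) S hmS
    have hμEc : ∀ k, μ (E k)ᶜ = μ Sᶜ := by
      intro k
      have : (E k)ᶜ = φ (tm k) ⁻¹' Sᶜ := by rw [hEdef]; simp [Set.preimage_compl]
      rw [this]
      exact hinv (tm k) Sᶜ hmS.compl
    have hnm : ∀ k, NullMeasurableSet (E k) μ := by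
      intro k
      apply nullMeasurableSet_of_add_compl μ
      rw [hμE k, hμEc k, measure_add_measure_compl hmS]
    have hdisj' : ∀ j k : ℕ, j < k → k < N → Disjoint (E j) (E k) := by
      intro j k hjk hkN
      rw [Set.disjoint_left]
      intro x hxj hxk
      set s : ℝ≥0 := ((k : ℝ≥0) - (j : ℝ≥0)) * δ with hsdef
      have hjk' : (j : ℝ≥0) ≤ (k : ℝ≥0) := by exact_mod_cast hjk.le
      have hs0 : 0 < s := mul_pos (tsub_pos_of_lt (by exact_mod_cast hjk)) hδpos
      have hsε : s < ε := by
        have h1 : (k : ℝ≥0) - (j : ℝ≥0) ≤ (k : ℝ≥0) := tsub_le_self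
        have h2 : (k : ℝ≥0) < (N : ℝ≥0) + 1 := by
          have hk : (k : ℝ≥0) ≤ (N : ℝ≥0) := by exact_mod_cast hkN.le
          exact hk.trans_lt (lt_add_of_pos_right _ one_pos)
        have h3 : s < ((N : ℝ≥0) + 1) * δ :=
          mul_lt_mul_of_pos_right (lt_of_le_of_lt h1 h2) hδpos
        have h4 : ((N : ℝ≥0) + 1) * δ = ε := by
          rw [hδdef, mul_div_cancel₀]
          positivity
        rwa [h4] at h3
      have hcast : (k : ℝ≥0) - (j : ℝ≥0) + ((j : ℝ≥0) + 1) = (k : ℝ≥0) + 1 := by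
        rw [← add_assoc, tsub_add_cancel_of_le hjk']
      have htm : tm k = s + tm j := by
        calc tm k = ((k : ℝ≥0) + 1) * δ := rfl
          _ = ((k : ℝ≥0) - (j : ℝ≥0) + ((j : ℝ≥0) + 1)) * δ := by rw [hcast]
          _ = s + tm j := add_mul _ _ _
      have hstep : φ (tm k) x = φ s (φ (tm j) x) := by
        rw [htm]; exact hsemi (tm j) s x
      have hy : φ (tm j) x ∈ S := hxj
      have : φ s (φ (tm j) x) ∉ D := key _ hy s hs0 hsε
      rw [← hstep] at this
      exact this hxk.1
    have hdisj : Set.Pairwise (↑(Finset.range N)) (AEDisjoint μ on E) := by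
      intro j hj k hk hjk
      rcases lt_or_gt_of_ne hjk with h | h
      · exact Disjoint.aedisjoint (hdisj' j k h (Finset.mem_range.mp hk))
      · exact (Disjoint.aedisjoint (hdisj' k j h (Finset.mem_range.mp hj))).symm
    have hsum : μ (⋃ k ∈ Finset.range N, E k) = ∑ k ∈ Finset.range N, μ (E k) :=
      measure_biUnion_finset₀ hdisj fun k _ => hnm k
    have h1 : ∑ k ∈ Finset.range N, μ (E k) ≤ 1 := by
      rw [← hsum]
      calc μ (⋃ k ∈ Finset.range N, E k) ≤ μ Set.univ := measure_mono (Set.subset_univ _)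
        _ = 1 := measure_univ
    calc (N : ℝ≥0∞) * μ S = ∑ _k ∈ Finset.range N, μ S := by
          rw [Finset.sum_const, Finset.card_range, nsmul_eq_mul]
      _ = ∑ k ∈ Finset.range N, μ (E k) := by
          exact Finset.sum_congr rfl fun k _ => (hμE k).symm
      _ ≤ 1 := h1
  -- Conclude μ S = 0
  by_contra hne
  have hS0 : μ S ≠ 0 := hne
  have hStop : μ S ≠ ∞ := measure_ne_top μ S
  have hfin : (1 : ℝ≥0∞) / μ S ≠ ∞ := by simp [ENNReal.div_eq_top, hS0]
  obtain ⟨N, hN⟩ := ENNReal.exists_nat_gt hfin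
  have h1 : (1 : ℝ≥0∞) < (N : ℝ≥0∞) * μ S := by
    rw [← ENNReal.div_lt_iff (Or.inl hS0) (Or.inl hStop)]
    exact hN
  exact absurd (hbound N) (not_le.mpr h1)

/-- If `τ_D` (equal to `τ₁` on `Ω_φ \ D` and to `0` on `Ω_φ ∩ D`) is continuous and
`I(Ω_φ ∩ D) ⊆ Ω_φ \ D`, then every `φ`-invariant Borel probability measure gives
measure zero to `D`. -/
theorem stmt16 {X : Type*} [MetricSpace X] [CompactSpace X]
    [MeasurableSpace X] [BorelSpace X]
    (φb : ℝ≥0 → X → X) (D : Set X) (I : X → X) (φ : ℝ≥0 → X → X)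
    (hφb : IsSemiflow φb) (hc : Continuous fun p : ℝ≥0 × X => φb p.1 p.2)
    (hD : IsCompact D) (hI : ContinuousOn I D)
    (hpos : ∀ x, 0 < ImpulsiveTau φb D x)
    (hφ : IsImpulsiveSemiflow φb D I φ)
    (htauD : ContinuousOn (fun x => if x ∈ D then (0 : ℝ≥0∞) else ImpulsiveTau φb D x)
      (NonWanderingSet φ))
    (hID : I '' (NonWanderingSet φ ∩ D) ⊆ NonWanderingSet φ \ D)
    (μ : Measure X) [IsProbabilityMeasure μ]
    (hinv : ∀ t : ℝ≥0, ∀ A : Set X, MeasurableSet A → μ (φ t ⁻¹' A) = μ A) :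
    μ D = 0 := by
  set Sn : ℕ → Set X := fun n =>
    {x | x ∈ D ∧ ∀ t : ℝ≥0, 0 < t → t < ((n : ℝ≥0) + 1)⁻¹ → φb t x ∉ D} with hSndef
  have hcover : D ⊆ ⋃ n : ℕ, Sn n := by
    intro x hxD
    obtain ⟨n, hn⟩ := ENNReal.exists_inv_nat_lt (hpos x).ne'
    refine Set.mem_iUnion.mpr ⟨n, hxD, ?_⟩
    intro t ht0 htn hcon
    have hmem : (t : ℝ≥0∞) ∈ ((fun t : ℝ≥0 => (t : ℝ≥0∞)) ''
        {t : ℝ≥0 | 0 < t ∧ φb t x ∈ D}) := ⟨t, ⟨ht0, hcon⟩, rfl⟩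
    have hle : ImpulsiveTau φb D x ≤ (t : ℝ≥0∞) := sInf_le hmem
    have hcoe : ((((n : ℝ≥0) + 1)⁻¹ : ℝ≥0) : ℝ≥0∞) = ((n : ℝ≥0∞) + 1)⁻¹ := by
      rw [ENNReal.coe_inv (by positivity)]
      push_cast
      rfl
    have h1 : (t : ℝ≥0∞) < ((n : ℝ≥0∞) + 1)⁻¹ := by
      rw [← hcoe]
      exact_mod_cast htn
    have h2 : ((n : ℝ≥0∞) + 1)⁻¹ ≤ (n : ℝ≥0∞)⁻¹ :=
      ENNReal.inv_le_inv' (le_add_of_nonneg_right zero_le_one)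
    have : ImpulsiveTau φb D x < ImpulsiveTau φb D x :=
      lt_of_le_of_lt hle (lt_of_lt_of_le h1 (h2.trans hn.le))
    exact lt_irrefl _ this
  have hSn0 : ∀ n : ℕ, μ (Sn n) = 0 := by
    intro n
    exact measure_slice_zero φb D φ hc hD hφ.1.2 hφ.2.1 μ hinv
      ((n : ℝ≥0) + 1)⁻¹ (by positivity)
  have : μ D ≤ ∑' n : ℕ, μ (Sn n) :=
    le_trans (measure_mono hcover) (measure_iUnion_le Sn)
  simpa [hSn0] using le_antisymm (by simpa [hSn0] using this) zero_le
end

section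
/- Let φ be the semiflow of an impulsive dynamical system (X, φ̄, D, I) with τ_D continuous and I(Ω_φ ∩ D) ⊂ Ω_φ \ D, let h: Ω_φ \ D → Y be a continuous bimeasurable bijection onto a compact metric space Y conjugating φ restricted to Ω_φ \ D with a continuous semiflow ψ on Y, and let ι: Ω_φ \ D → X be the inclusion. Then the map (ι ∘ h⁻¹)_* from ψ-invariant probability measures on Y to φ-invariant probability measures on X is a bijection. -/
open Set Filter Topology MeasureTheory Function
open scoped NNReal ENNReal Classical

namespace Stmt19Aux
set_option linter.unusedVariables false
set_option linter.unusedSectionVars false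


variable {X : Type*} [MetricSpace X]

/-- times in `[a,b]` at which the base orbit hits `D`. -/
def Hit (φb : ℝ≥0 → X → X) (D : Set X) (a b : ℝ≥0) : Set X :=
  {z | ∃ t : ℝ≥0, a ≤ t ∧ t ≤ b ∧ φb t z ∈ D}

theorem tau_le_of_hit {φb : ℝ≥0 → X → X} {D : Set X} {x : X} {t : ℝ≥0}
    (ht : 0 < t) (hx : φb t x ∈ D) : ImpulsiveTau φb D x ≤ t :=
  sInf_le ⟨t, ⟨ht, hx⟩, rfl⟩

theorem not_mem_of_lt_tau {φb : ℝ≥0 → X → X} {D : Set X} {x : X} {t : ℝ≥0}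
    (ht : 0 < t) (htau : (t : ℝ≥0∞) < ImpulsiveTau φb D x) : φb t x ∉ D :=
  fun hx => absurd (tau_le_of_hit ht hx) (not_le.mpr htau)

theorem continuous_phib_apply {φb : ℝ≥0 → X → X}
    (hcb : Continuous fun p : ℝ≥0 × X => φb p.1 p.2) (x : X) :
    Continuous fun t => φb t x :=
  hcb.comp (continuous_id.prodMk continuous_const)

/-- the first impulsive time, when finite, is attained (`D` closed). -/
theorem hit_of_tau_eq {φb : ℝ≥0 → X → X} {D : Set X} {x : X} {s : ℝ≥0}
    (hcb : Continuous fun p : ℝ≥0 × X => φb p.1 p.2) (hDc : IsClosed D)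
    (hφb : IsSemiflow φb)
    (h : ImpulsiveTau φb D x = (s : ℝ≥0∞)) : φb s x ∈ D := by
  have key : ∀ δ : ℝ≥0, 0 < δ → ∃ t : ℝ≥0, (0 < t ∧ φb t x ∈ D) ∧ s ≤ t ∧ t < s + δ := by
    intro δ hδ
    have hlt : ImpulsiveTau φb D x < ((s + δ : ℝ≥0) : ℝ≥0∞) := by
      rw [h]
      exact_mod_cast lt_add_of_pos_right s hδ
    obtain ⟨b, hb, hbs⟩ := sInf_lt_iff.mp hlt
    obtain ⟨t, ht, rfl⟩ := hb
    have hbs' : (t : ℝ≥0∞) < ((s + δ : ℝ≥0) : ℝ≥0∞) := hbs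
    refine ⟨t, ht, ?_, by exact_mod_cast hbs'⟩
    have : (s : ℝ≥0∞) ≤ (t : ℝ≥0∞) := h ▸ sInf_le ⟨t, ht, rfl⟩
    exact_mod_cast this
  have hne : ∀ n : ℕ, ∃ t : ℝ≥0, (0 < t ∧ φb t x ∈ D) ∧ s ≤ t ∧ t < s + 1/((n:ℝ≥0)+1) := by
    intro n
    exact key _ (by positivity)
  choose t ht hst htl using hne
  have htend : Tendsto t atTop (𝓝 s) := by
    have h0 : Tendsto (fun n : ℕ => 1/((n:ℝ≥0)+1)) atTop (𝓝 0) := by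
      have hh := (tendsto_const_div_atTop_nhds_zero_nat (1 : ℝ≥0)).comp (tendsto_add_atTop_nat 1)
      refine hh.congr fun n => ?_
      simp only [Function.comp_apply]
      push_cast
      ring
    have h1 : Tendsto (fun n : ℕ => s + 1/((n:ℝ≥0)+1)) atTop (𝓝 (s + 0)) :=
      tendsto_const_nhds.add h0
    rw [add_zero] at h1
    refine tendsto_of_tendsto_of_tendsto_of_le_of_le tendsto_const_nhds h1 hst ?_
    intro n
    exact le_of_lt (by exact_mod_cast htl n)
  have : Tendsto (fun n => φb (t n) x) atTop (𝓝 (φb s x)) :=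
    ((continuous_phib_apply hcb x).tendsto s).comp htend
  exact hDc.mem_of_tendsto this (Eventually.of_forall fun n => (ht n).2)

theorem isClosed_hit [CompactSpace X] {φb : ℝ≥0 → X → X}
    (hcb : Continuous fun p : ℝ≥0 × X => φb p.1 p.2) {D : Set X} (hDc : IsClosed D)
    (a b : ℝ≥0) : IsClosed (Hit φb D a b) := by
  have hK : IsCompact ((Icc a b ×ˢ (univ : Set X)) ∩ (fun p : ℝ≥0 × X => φb p.1 p.2) ⁻¹' D) := by
    refine (isCompact_Icc.prod isCompact_univ).of_isClosed_subset ?_ inter_subset_left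
    exact ((isClosed_Icc.prod isClosed_univ)).inter (hDc.preimage hcb)
  have : Hit φb D a b = Prod.snd '' ((Icc a b ×ˢ (univ : Set X)) ∩ (fun p : ℝ≥0 × X => φb p.1 p.2) ⁻¹' D) := by
    ext z
    constructor
    · rintro ⟨t, hat, htb, hz⟩
      exact ⟨(t, z), ⟨⟨⟨hat, htb⟩, trivial⟩, hz⟩, rfl⟩
    · rintro ⟨⟨t, z'⟩, ⟨⟨⟨hat, htb⟩, -⟩, hz⟩, rfl⟩
      exact ⟨t, hat, htb, hz⟩
  rw [this]
  exact (hK.image continuous_snd).isClosed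

/-- lower semicontinuity of the first impulsive time off `D`:
points near `x ∉ D` have first impulsive time `> s` whenever `s < τ(x)`. -/
theorem eventually_lt_tau [CompactSpace X] {φb : ℝ≥0 → X → X}
    (hcb : Continuous fun p : ℝ≥0 × X => φb p.1 p.2) {D : Set X} (hDc : IsClosed D)
    (hφb : IsSemiflow φb)
    {x : X} (hxD : x ∉ D) {s : ℝ≥0} (hs : (s : ℝ≥0∞) < ImpulsiveTau φb D x) :
    ∀ᶠ z in 𝓝 x, (s : ℝ≥0∞) < ImpulsiveTau φb D z := by
  obtain ⟨c, hc1, hc2⟩ := exists_between hs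
  have hcfin : c ≠ ⊤ := (hc2.trans_le le_top).ne
  set s' : ℝ≥0 := c.toNNReal with hs'
  have hcs' : (s' : ℝ≥0∞) = c := ENNReal.coe_toNNReal hcfin
  have hss' : s < s' := by
    have : (s : ℝ≥0∞) < (s' : ℝ≥0∞) := by rw [hcs']; exact hc1
    exact_mod_cast this
  have hxV : x ∉ Hit φb D 0 s' := by
    rintro ⟨t, -, hts, hxt⟩
    rcases eq_or_lt_of_le (zero_le : 0 ≤ t) with h0 | h0
    · rw [← h0, hφb.1 x] at hxt
      exact hxD hxt
    · have := tau_le_of_hit h0 hxt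
      have : ImpulsiveTau φb D x ≤ (s' : ℝ≥0∞) := this.trans (by exact_mod_cast hts)
      rw [hcs'] at this
      exact absurd this (not_le.mpr hc2)
  have hopen : IsOpen (Hit φb D 0 s')ᶜ := (isClosed_hit hcb hDc 0 s').isOpen_compl
  filter_upwards [hopen.mem_nhds hxV] with z hz
  have : (s' : ℝ≥0∞) ≤ ImpulsiveTau φb D z := by
    apply le_sInf
    rintro b ⟨t, ⟨ht0, htD⟩, rfl⟩
    by_contra hlt
    push_neg at hlt
    have : t < s' := by exact_mod_cast hlt
    exact hz ⟨t, zero_le, this.le, htD⟩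
  calc (s : ℝ≥0∞) < (s' : ℝ≥0∞) := by exact_mod_cast hss'
    _ ≤ _ := this




theorem isClosed_nonWanderingSet {X : Type*} [TopologicalSpace X] (φ : ℝ≥0 → X → X) :
    IsClosed (NonWanderingSet φ) := by
  rw [← isOpen_compl_iff, isOpen_iff_mem_nhds]
  intro x hx
  simp only [NonWanderingSet, mem_compl_iff, mem_setOf_eq, NonWandering] at hx
  push_neg at hx
  obtain ⟨U, hU, T, hT, hw⟩ := hx
  obtain ⟨V, hVU, hVopen, hxV⟩ := mem_nhds_iff.mp hU
  filter_upwards [hVopen.mem_nhds hxV] with y hy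
  simp only [mem_compl_iff, NonWanderingSet, mem_setOf_eq, NonWandering]
  push_neg
  refine ⟨U, mem_nhds_iff.mpr ⟨V, hVU, hVopen, hy⟩, T, hT, hw⟩

variable {X : Type*} [MetricSpace X] [CompactSpace X]
variable {φb : ℝ≥0 → X → X} {D : Set X} {I : X → X} {φ : ℝ≥0 → X → X}

theorem mem_S_of_lt_tau (hφb : IsSemiflow φb)
    (hcb : Continuous fun p : ℝ≥0 × X => φb p.1 p.2)
    (hD : IsCompact D) (hφ : IsImpulsiveSemiflow φb D I φ)
    {x : X} (hx : x ∈ NonWanderingSet φ \ D) {s : ℝ≥0}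
    (hs : (s : ℝ≥0∞) < ImpulsiveTau φb D x) :
    φ s x ∈ NonWanderingSet φ \ D := by
  have hfs : φ s x = φb s x := hφ.2.1 x s hs
  constructor
  · -- nonwandering
    intro U' hU' T hT
    have hU'b : U' ∈ 𝓝 (φb s x) := hfs ▸ hU'
    have hcont : Continuous fun z => φb s z := hcb.comp (continuous_const.prodMk continuous_id)
    have hV1 : ∀ᶠ z in 𝓝 x, φb s z ∈ U' := hcont.continuousAt.preimage_mem_nhds hU'b
    have hV2 : ∀ᶠ z in 𝓝 x, (s : ℝ≥0∞) < ImpulsiveTau φb D z :=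
      eventually_lt_tau hcb hD.isClosed hφb hx.2 hs
    have hV := hV1.and hV2
    obtain ⟨t, hTt, w, hw1, hw2⟩ := hx.1 _ hV T hT
    refine ⟨t, hTt, φ s w, ?_, ?_⟩
    · -- φ t (φ s w) ∈ U'
      have h1 : φ t (φ s w) = φ s (φ t w) := by
        rw [← hφ.1.2 s t w, ← hφ.1.2 t s w, add_comm]
      have h2 : φ s (φ t w) = φb s (φ t w) := hφ.2.1 _ s hw1.2
      simp only [mem_preimage]
      rw [h1, h2]
      exact hw1.1
    · have : φ s w = φb s w := hφ.2.1 w s hw2.2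
      rw [this]
      exact hw2.1
  · -- not in D
    rcases eq_or_lt_of_le (zero_le : 0 ≤ s) with h0 | h0
    · rw [hfs, ← h0, hφb.1 x]
      exact hx.2
    · rw [hfs]
      exact not_mem_of_lt_tau h0 hs

theorem jump_mem (hφb : IsSemiflow φb)
    (hcb : Continuous fun p : ℝ≥0 × X => φb p.1 p.2)
    (hD : IsCompact D) (hpos : ∀ x, 0 < ImpulsiveTau φb D x)
    (hφ : IsImpulsiveSemiflow φb D I φ)
    (hID : I '' (NonWanderingSet φ ∩ D) ⊆ NonWanderingSet φ \ D)
    {x : X} (hx : x ∈ NonWanderingSet φ \ D) {s : ℝ≥0}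
    (hs : ImpulsiveTau φb D x = (s : ℝ≥0∞)) :
    φb s x ∈ NonWanderingSet φ ∩ D ∧ φ s x ∈ NonWanderingSet φ \ D := by
  have hs0 : 0 < s := by
    have := hpos x
    rw [hs] at this
    exact_mod_cast this
  have hpD : φb s x ∈ D := hit_of_tau_eq hcb hD.isClosed hφb hs
  have hpΩ : φb s x ∈ NonWanderingSet φ := by
    -- approximate along times u_n ↑ s
    have hu0 : Tendsto (fun n : ℕ => s / ((n : ℝ≥0) + 2)) atTop (𝓝 0) := by
      have hh := (tendsto_const_div_atTop_nhds_zero_nat s).comp (tendsto_add_atTop_nat 2)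
      refine hh.congr fun n => ?_
      simp only [Function.comp_apply]
      push_cast
      ring
    have hu_tend : Tendsto (fun n : ℕ => s - s / ((n : ℝ≥0) + 2)) atTop (𝓝 s) := by
      have h2 : Tendsto (fun n : ℕ => s - s / ((n : ℝ≥0) + 2)) atTop (𝓝 (s - 0)) :=
        Tendsto.sub (tendsto_const_nhds : Tendsto (fun _ : ℕ => s) atTop (𝓝 s)) hu0
      simpa using h2
    have hu_lt : ∀ n : ℕ, s - s / ((n : ℝ≥0) + 2) < s := by
      intro n
      exact tsub_lt_self hs0 (by positivity)
    have hmem : ∀ n : ℕ, φb (s - s / ((n : ℝ≥0) + 2)) x ∈ NonWanderingSet φ := by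
      intro n
      have hlt : ((s - s / ((n : ℝ≥0) + 2) : ℝ≥0) : ℝ≥0∞) < ImpulsiveTau φb D x := by
        rw [hs]
        exact_mod_cast hu_lt n
      have := mem_S_of_lt_tau hφb hcb hD hφ hx hlt
      rw [hφ.2.1 x _ hlt] at this
      exact this.1
    have htend : Tendsto (fun n : ℕ => φb (s - s / ((n : ℝ≥0) + 2)) x) atTop (𝓝 (φb s x)) :=
      ((hcb.comp (continuous_id.prodMk continuous_const)).tendsto s).comp hu_tend
    exact (isClosed_nonWanderingSet φ).mem_of_tendsto htend (Eventually.of_forall hmem)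
  refine ⟨⟨hpΩ, hpD⟩, ?_⟩
  have : φ s x = I (φb s x) := hφ.2.2 x s hs.symm
  rw [this]
  exact hID ⟨φb s x, ⟨hpΩ, hpD⟩, rfl⟩


end Stmt19Aux

namespace Stmt19Aux
set_option linter.unusedVariables false
set_option linter.unusedSectionVars false


variable {X : Type*} [MetricSpace X] [CompactSpace X]
variable {φb : ℝ≥0 → X → X} {D : Set X} {I : X → X} {φ : ℝ≥0 → X → X}

/-- the sequence of post-impulse points of the impulsive orbit of `x`. -/
noncomputable def orbitSeq (φb : ℝ≥0 → X → X) (D : Set X) (φ : ℝ≥0 → X → X) (x : X) : ℕ → X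
  | 0 => x
  | (k+1) => φ (ImpulsiveTau φb D (orbitSeq φb D φ x k)).toNNReal (orbitSeq φb D φ x k)

/-- partial sums of impulse inter-times. -/
noncomputable def sigmaSeq (φb : ℝ≥0 → X → X) (D : Set X) (φ : ℝ≥0 → X → X) (x : X)
    (k : ℕ) : ℝ≥0∞ :=
  ∑ i ∈ Finset.range k, ImpulsiveTau φb D (orbitSeq φb D φ x i)

theorem forward_inv (hφb : IsSemiflow φb)
    (hcb : Continuous fun p : ℝ≥0 × X => φb p.1 p.2)
    (hD : IsCompact D) (hI : ContinuousOn I D)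
    (hpos : ∀ x, 0 < ImpulsiveTau φb D x)
    (hφ : IsImpulsiveSemiflow φb D I φ)
    (hID : I '' (NonWanderingSet φ ∩ D) ⊆ NonWanderingSet φ \ D)
    {x : X} (hx : x ∈ NonWanderingSet φ \ D) (t : ℝ≥0) :
    φ t x ∈ NonWanderingSet φ \ D := by
  classical
  set S := NonWanderingSet φ \ D with hS
  set Yk := orbitSeq φb D φ x with hYk
  set σ := sigmaSeq φb D φ x with hσ
  have hY0 : Yk 0 = x := rfl
  have hYsucc : ∀ k, Yk (k+1) = φ (ImpulsiveTau φb D (Yk k)).toNNReal (Yk k) := fun k => rfl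
  have hσ0 : σ 0 = 0 := by simp [hσ, sigmaSeq]
  have hσsucc : ∀ k, σ (k+1) = σ k + ImpulsiveTau φb D (Yk k) := by
    intro k
    simp [hσ, sigmaSeq, Finset.sum_range_succ]
    rfl
  have hσmono : Monotone σ := by
    intro i j hij
    exact Finset.sum_le_sum_of_subset (Finset.range_subset_range.mpr hij)
  have claim1 : ∀ k, (∀ i < k, ImpulsiveTau φb D (Yk i) ≠ ⊤) →
      Yk k ∈ S ∧ σ k ≠ ⊤ ∧ φ (σ k).toNNReal x = Yk k := by
    intro k
    induction k with
    | zero =>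
      intro _
      refine ⟨hx, by simp [hσ0], ?_⟩
      rw [hσ0]
      simpa [hY0] using hφ.1.1 x
    | succ k ih =>
      intro hfa
      obtain ⟨hmem, hfin, hid⟩ := ih (fun i hi => hfa i (hi.trans (Nat.lt_succ_self k)))
      have hτfin : ImpulsiveTau φb D (Yk k) ≠ ⊤ := hfa k (Nat.lt_succ_self k)
      set r := (ImpulsiveTau φb D (Yk k)).toNNReal with hr
      have hτr : ImpulsiveTau φb D (Yk k) = (r : ℝ≥0∞) := (ENNReal.coe_toNNReal hτfin).symm
      have hj := jump_mem hφb hcb hD hpos hφ hID hmem hτr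
      refine ⟨?_, ?_, ?_⟩
      · exact hj.2
      · rw [hσsucc k]
        exact ENNReal.add_ne_top.mpr ⟨hfin, hτfin⟩
      · have htn : (σ (k+1)).toNNReal = (σ k).toNNReal + r := by
          rw [hσsucc k, hτr, ENNReal.toNNReal_add hfin (by simp)]
          simp
        rw [htn, add_comm, hφ.1.2 ((σ k).toNNReal) r x, hid]
        rfl
  by_cases hcase : ∃ k, (t : ℝ≥0∞) < σ (k+1)
  · set k := Nat.find hcase with hk
    have hkt : (t : ℝ≥0∞) < σ (k+1) := Nat.find_spec hcase
    have hσk_le : σ k ≤ (t : ℝ≥0∞) := by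
      rcases Nat.eq_zero_or_pos k with h0 | h0
      · rw [h0, hσ0]; exact zero_le
      · obtain ⟨m, hm⟩ := Nat.exists_eq_succ_of_ne_zero h0.ne'
        have := Nat.find_min hcase (m := m) (by omega)
        rw [hm]
        exact not_lt.mp this
    have hfin_i : ∀ i < k, ImpulsiveTau φb D (Yk i) ≠ ⊤ := by
      intro i hi
      have h1 : ImpulsiveTau φb D (Yk i) ≤ σ (i+1) := by
        rw [hσsucc i]
        exact le_add_self
      have h2 : σ (i+1) ≤ σ k := hσmono hi
      exact ((h1.trans (h2.trans hσk_le)).trans_lt ENNReal.coe_lt_top).ne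
    obtain ⟨hmem, hfin, hid⟩ := claim1 k hfin_i
    set a := (σ k).toNNReal with ha
    have hca : (a : ℝ≥0∞) = σ k := ENNReal.coe_toNNReal hfin
    have ha_le : a ≤ t := by
      have : (a : ℝ≥0∞) ≤ (t : ℝ≥0∞) := hca ▸ hσk_le
      exact_mod_cast this
    set u := t - a with hu
    have hu_lt : (u : ℝ≥0∞) < ImpulsiveTau φb D (Yk k) := by
      have h1 : (t : ℝ≥0∞) < σ k + ImpulsiveTau φb D (Yk k) := by
        rw [← hσsucc k]; exact hkt
      rw [← hca] at h1
      have h2 : (t : ℝ≥0∞) - (a : ℝ≥0∞) < ImpulsiveTau φb D (Yk k) :=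
        ENNReal.sub_lt_of_lt_add (by exact_mod_cast ha_le) (by rwa [add_comm] at h1)
      rwa [hu, ENNReal.coe_sub] at *
      
    have hsplit : φ t x = φ u (Yk k) := by
      have : u + a = t := tsub_add_cancel_of_le ha_le
      rw [← this, hφ.1.2 a u x, hid]
    rw [hsplit]
    exact mem_S_of_lt_tau hφb hcb hD hφ hmem hu_lt
  · -- Zeno case: impossible
    exfalso
    push_neg at hcase
    have hfink : ∀ k, ImpulsiveTau φb D (Yk k) ≠ ⊤ := by
      intro k
      have h1 : ImpulsiveTau φb D (Yk k) ≤ σ (k+1) := by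
        rw [hσsucc k]; exact le_add_self
      exact ((h1.trans (hcase k)).trans_lt ENNReal.coe_lt_top).ne
    have hmem : ∀ k, Yk k ∈ S := fun k => (claim1 k (fun i _ => hfink i)).1
    set r := fun k => (ImpulsiveTau φb D (Yk k)).toNNReal with hrdef
    have hτr : ∀ k, ImpulsiveTau φb D (Yk k) = (r k : ℝ≥0∞) :=
      fun k => (ENNReal.coe_toNNReal (hfink k)).symm
    set a := fun k => (σ k).toNNReal with hadef
    have hσfin : ∀ k, σ k ≠ ⊤ := fun k => (claim1 k (fun i _ => hfink i)).2.1
    have hca : ∀ k, (a k : ℝ≥0∞) = σ k := fun k => ENNReal.coe_toNNReal (hσfin k)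
    have ha_mono : Monotone a := by
      intro i j hij
      have : (a i : ℝ≥0∞) ≤ (a j : ℝ≥0∞) := by rw [hca i, hca j]; exact hσmono hij
      exact_mod_cast this
    have ha_le : ∀ k, a k ≤ t := by
      intro k
      have h2 : σ k ≤ σ (k+1) := hσmono (Nat.le_succ k)
      have : (a k : ℝ≥0∞) ≤ (t : ℝ≥0∞) := by rw [hca k]; exact h2.trans (hcase k)
      exact_mod_cast this
    have ha_tend : Tendsto a atTop (𝓝 (⨆ k, a k)) :=
      tendsto_atTop_ciSup ha_mono ⟨t, fun v ⟨k, hk⟩ => hk ▸ ha_le k⟩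
    have hsucc_a : ∀ k, a (k+1) = a k + r k := by
      intro k
      have : (a (k+1) : ℝ≥0∞) = (a k + r k : ℝ≥0) := by
        rw [hca (k+1), hσsucc k, ← hca k, hτr k]
        push_cast
        rfl
      exact_mod_cast this
    have hr_tend : Tendsto r atTop (𝓝 0) := by
      have h1 : Tendsto (fun k => a (k+1)) atTop (𝓝 (⨆ k, a k)) :=
        ha_tend.comp (tendsto_add_atTop_nat 1)
      have h2 : Tendsto (fun k => a (k+1) - a k) atTop (𝓝 ((⨆ k, a k) - (⨆ k, a k))) :=
        Tendsto.sub h1 ha_tend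
      simp only [tsub_self] at h2
      refine h2.congr fun k => ?_
      rw [hsucc_a k, add_tsub_cancel_left]
    set q := fun k => φb (r k) (Yk k) with hqdef
    have hq : ∀ k, q k ∈ NonWanderingSet φ ∩ D :=
      fun k => (jump_mem hφb hcb hD hpos hφ hID (hmem k) (hτr k)).1
    have hYq : ∀ k, Yk (k+1) = I (q k) := by
      intro k
      have := hφ.2.2 (Yk k) (r k) (hτr k).symm
      rw [hYsucc k]
      exact this
    have hΩD_cpt : IsCompact (NonWanderingSet φ ∩ D) :=
      hD.inter_left (isClosed_nonWanderingSet φ)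
    obtain ⟨qlim, hqlim_mem, m, hm_mono, hqm_tend⟩ := hΩD_cpt.tendsto_subseq hq
    have hIq_tend : Tendsto (fun j => I (q (m j))) atTop (𝓝 (I qlim)) := by
      have hwithin : Tendsto (fun j => q (m j)) atTop (𝓝[D] qlim) :=
        tendsto_nhdsWithin_iff.mpr ⟨hqm_tend, Eventually.of_forall fun j => (hq (m j)).2⟩
      exact (hI qlim hqlim_mem.2).tendsto.comp hwithin
    have hxstar : I qlim ∈ NonWanderingSet φ \ D := hID ⟨qlim, hqlim_mem, rfl⟩
    have hY_tend : Tendsto (fun j => Yk (m j + 1)) atTop (𝓝 (I qlim)) := by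
      refine hIq_tend.congr fun j => (hYq (m j)).symm
    have hn_tend : Tendsto (fun j => m j + 1) atTop atTop :=
      tendsto_atTop_mono (fun j => Nat.le_succ (m j)) hm_mono.tendsto_atTop
    have hq2_tend : Tendsto (fun j => q (m j + 1)) atTop (𝓝 (I qlim)) := by
      have hpair : Tendsto (fun j => ((r (m j + 1), Yk (m j + 1)) : ℝ≥0 × X)) atTop
          (𝓝 (0, I qlim)) :=
        (hr_tend.comp hn_tend).prodMk_nhds hY_tend
      have := (hcb.tendsto ((0 : ℝ≥0), I qlim)).comp hpair
      simpa [hqdef, hφb.1, Function.comp_def] using this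
    have : I qlim ∈ D :=
      hD.isClosed.mem_of_tendsto hq2_tend (Eventually.of_forall fun j => (hq (m j + 1)).2)
    exact hxstar.2 this


end Stmt19Aux

namespace Stmt19Aux
set_option linter.unusedVariables false
set_option linter.unusedSectionVars false


/-- a measurable kernel of full measure inside the (possibly non-measurable)
preimage of a measurable set under a measure-preserving map. -/
theorem exists_kernel {X : Type*} [MeasurableSpace X] (μ : Measure X)
    [IsProbabilityMeasure μ] {f : X → X}
    (hinv : ∀ A : Set X, MeasurableSet A → μ (f ⁻¹' A) = μ A)
    {A : Set X} (hA : MeasurableSet A) :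
    ∃ K : Set X, MeasurableSet K ∧ K ⊆ f ⁻¹' A ∧ μ K = μ A := by
  obtain ⟨B, hsub, hBm, hBμ⟩ := exists_measurable_superset μ (f ⁻¹' Aᶜ)
  refine ⟨Bᶜ, hBm.compl, ?_, ?_⟩
  · intro x hx
    by_contra hfx
    exact hx (hsub hfx)
  · have h1 : μ B = μ Aᶜ := by rw [hBμ, hinv Aᶜ hA.compl]
    rw [measure_compl hBm (measure_ne_top μ B), h1, measure_univ,
      prob_compl_eq_one_sub hA, ENNReal.sub_sub_cancel ENNReal.one_ne_top prob_le_one]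

theorem null_of_forall_nat_mul_le {c : ℝ≥0∞} (hc : c ≤ 1) (h : ∀ N : ℕ, N * c ≤ 1) :
    c = 0 := by
  by_contra hc0
  have hcfin : c ≠ ⊤ := (hc.trans_lt ENNReal.one_lt_top).ne
  obtain ⟨N, hN⟩ := ENNReal.exists_nat_gt (ne_top_of_lt (ENNReal.div_lt_top ENNReal.one_ne_top hc0))
  have : (1 : ℝ≥0∞) < N * c := by
    rw [← ENNReal.div_lt_iff (Or.inl hc0) (Or.inl hcfin)]
    exact hN
  exact absurd (h N) (not_le.mpr this)

/-- If `U` is measurable and wandering then any invariant probability gives it zero mass. -/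
theorem wandering_null {X : Type*} [MeasurableSpace X] {φ : ℝ≥0 → X → X}
    (hφs : IsSemiflow φ) (μ : Measure X) [IsProbabilityMeasure μ]
    (hinv : ∀ t : ℝ≥0, ∀ A : Set X, MeasurableSet A → μ (φ t ⁻¹' A) = μ A)
    {U : Set X} (hU : MeasurableSet U) {T : ℝ≥0} (hT : 0 < T)
    (hw : ∀ t : ℝ≥0, T ≤ t → φ t ⁻¹' U ∩ U = ∅) : μ U = 0 := by
  have hdisj : ∀ m n : ℕ, m < n →
      Disjoint (φ (((m : ℝ≥0) + 1) * T) ⁻¹' U) (φ (((n : ℝ≥0) + 1) * T) ⁻¹' U) := by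
    intro m n hmn
    rw [Set.disjoint_left]
    intro z hzm hzn
    set d : ℝ≥0 := ((n : ℝ≥0) - (m : ℝ≥0)) * T with hd
    have hnm : (m : ℝ≥0) ≤ (n : ℝ≥0) := by exact_mod_cast hmn.le
    have hsum : d + ((m : ℝ≥0) + 1) * T = ((n : ℝ≥0) + 1) * T := by
      rw [hd, ← add_mul]
      congr 1
      rw [← add_assoc, tsub_add_cancel_of_le hnm]
    have hdT : T ≤ d := by
      have h1 : (1 : ℝ≥0) ≤ (n : ℝ≥0) - (m : ℝ≥0) := by
        have : (m : ℝ≥0) + 1 ≤ (n : ℝ≥0) := by exact_mod_cast hmn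
        exact le_tsub_of_add_le_left this
      calc T = 1 * T := (one_mul T).symm
        _ ≤ ((n : ℝ≥0) - (m : ℝ≥0)) * T := mul_le_mul_left h1 T
    have hzw : φ (((m : ℝ≥0) + 1) * T) z ∈ φ d ⁻¹' U ∩ U := by
      constructor
      · show φ d (φ (((m : ℝ≥0) + 1) * T) z) ∈ U
        rw [← hφs.2 (((m : ℝ≥0) + 1) * T) d z, hsum]
        exact hzn
      · exact hzm
    rw [hw d hdT] at hzw
    exact hzw
  have hker : ∀ n : ℕ, ∃ K : Set X, MeasurableSet K ∧
      K ⊆ φ (((n : ℝ≥0) + 1) * T) ⁻¹' U ∧ μ K = μ U :=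
    fun n => exists_kernel μ (hinv (((n : ℝ≥0) + 1) * T)) hU
  choose K hKm hKsub hKμ using hker
  have hNle : ∀ N : ℕ, (N : ℝ≥0∞) * μ U ≤ 1 := by
    intro N
    have hKdisj : (↑(Finset.range N) : Set ℕ).PairwiseDisjoint K := by
      intro i _ j _ hij
      rcases lt_or_gt_of_ne hij with hlt | hgt
      · exact Set.disjoint_of_subset (hKsub i) (hKsub j) (hdisj i j hlt)
      · exact (Set.disjoint_of_subset (hKsub j) (hKsub i) (hdisj j i hgt)).symm
    calc (N : ℝ≥0∞) * μ U = ∑ n ∈ Finset.range N, μ (K n) := by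
          simp [hKμ, Finset.sum_const, nsmul_eq_mul]
      _ = μ (⋃ n ∈ Finset.range N, K n) :=
          (measure_biUnion_finset hKdisj fun n _ => hKm n).symm
      _ ≤ 1 := prob_le_one
  exact null_of_forall_nat_mul_le prob_le_one hNle

/-- invariant probabilities are concentrated on the non-wandering set. -/
theorem omega_conull {X : Type*} [MetricSpace X] [CompactSpace X]
    [MeasurableSpace X] [BorelSpace X] {φ : ℝ≥0 → X → X}
    (hφs : IsSemiflow φ) (μ : Measure X) [IsProbabilityMeasure μ]
    (hinv : ∀ t : ℝ≥0, ∀ A : Set X, MeasurableSet A → μ (φ t ⁻¹' A) = μ A) :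
    μ (NonWanderingSet φ)ᶜ = 0 := by
  obtain ⟨B, hBcount, -, hBbasis⟩ := TopologicalSpace.exists_countable_basis X
  set C := {b ∈ B | μ b = 0} with hC
  have hsub : (NonWanderingSet φ)ᶜ ⊆ ⋃₀ C := by
    intro x hx
    simp only [NonWanderingSet, mem_compl_iff, mem_setOf_eq, NonWandering] at hx
    push_neg at hx
    obtain ⟨U, hU, T, hT, hw⟩ := hx
    obtain ⟨b, hbB, hxb, hbU⟩ := hBbasis.mem_nhds_iff.mp hU
    have hbw : ∀ t : ℝ≥0, T ≤ t → φ t ⁻¹' b ∩ b = ∅ := by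
      intro t ht
      rw [← Set.not_nonempty_iff_eq_empty]
      rintro ⟨z, hz1, hz2⟩
      have hempty := hw t ht
      rw [eq_empty_iff_forall_notMem] at hempty
      exact hempty z ⟨hbU hz1, hbU hz2⟩
    have hb0 : μ b = 0 :=
      wandering_null hφs μ hinv (hBbasis.isOpen hbB).measurableSet hT hbw
    exact ⟨b, ⟨hbB, hb0⟩, hxb⟩
  have : μ (⋃₀ C) = 0 := by
    rw [measure_sUnion_null_iff (hBcount.mono (sep_subset _ _))]
    exact fun b hb => hb.2
  exact measure_mono_null hsub this

/-- measurability of superlevel sets of the first impulsive time. -/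
theorem measurableSet_tau_lt {X : Type*} [MetricSpace X] [CompactSpace X]
    [MeasurableSpace X] [BorelSpace X] {φb : ℝ≥0 → X → X}
    (hcb : Continuous fun p : ℝ≥0 × X => φb p.1 p.2) {D : Set X} (hDc : IsClosed D)
    (ε : ℝ≥0) : MeasurableSet {x : X | ImpulsiveTau φb D x < (ε : ℝ≥0∞)} := by
  have heq : {x : X | ImpulsiveTau φb D x < (ε : ℝ≥0∞)} =
      ⋃ n : ℕ, Hit φb D (1 / ((n : ℝ≥0) + 1)) (ε - 1 / ((n : ℝ≥0) + 1)) := by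
    ext x
    simp only [mem_setOf_eq, mem_iUnion]
    constructor
    · intro hlt
      obtain ⟨b, hb, hbε⟩ := sInf_lt_iff.mp hlt
      obtain ⟨t, ⟨ht0, htD⟩, rfl⟩ := hb
      have hbε' : (t : ℝ≥0∞) < (ε : ℝ≥0∞) := hbε
      have htε : t < ε := by exact_mod_cast hbε'
      have hpos2 : 0 < min t (ε - t) := lt_min ht0 (tsub_pos_of_lt htε)
      obtain ⟨n, hn⟩ := exists_nat_gt ((min t (ε - t))⁻¹ : ℝ≥0)
      have hrec : 1 / ((n : ℝ≥0) + 1) ≤ min t (ε - t) := by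
        rw [div_le_iff₀ (by positivity)]
        rw [← div_le_iff₀' hpos2, div_eq_mul_inv, one_mul]
        exact le_of_lt (hn.trans_le (le_add_of_nonneg_right zero_le_one))
      refine ⟨n, t, hrec.trans (min_le_left _ _), ?_, htD⟩
      have h2 : 1 / ((n : ℝ≥0) + 1) ≤ ε - t := hrec.trans (min_le_right _ _)
      have h3 : 1 / ((n : ℝ≥0) + 1) + t ≤ ε := (le_tsub_iff_right htε.le).mp h2
      exact (le_tsub_iff_left (h2.trans tsub_le_self)).mpr h3
    · rintro ⟨n, t, h1t, htb, htD⟩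
      have ht0 : 0 < t := lt_of_lt_of_le (by positivity) h1t
      have hε0 : 0 < ε := by
        by_contra hε
        push_neg at hε
        have hε' : ε = 0 := le_antisymm hε zero_le
        rw [hε', zero_tsub] at htb
        exact absurd (ht0.trans_le htb) (lt_irrefl 0)
      have htε : t < ε := lt_of_le_of_lt htb (tsub_lt_self hε0 (by positivity))
      exact lt_of_le_of_lt (tau_le_of_hit ht0 htD) (ENNReal.coe_lt_coe.mpr htε)
  rw [heq]
  exact MeasurableSet.iUnion fun n => (isClosed_hit hcb hDc _ _).measurableSet

/-- invariant probabilities give no mass to `D`. -/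
theorem D_null {X : Type*} [MetricSpace X] [CompactSpace X]
    [MeasurableSpace X] [BorelSpace X] {φb : ℝ≥0 → X → X} {D : Set X} {I : X → X}
    {φ : ℝ≥0 → X → X}
    (hcb : Continuous fun p : ℝ≥0 × X => φb p.1 p.2)
    (hD : IsCompact D) (hpos : ∀ x, 0 < ImpulsiveTau φb D x)
    (hφ : IsImpulsiveSemiflow φb D I φ)
    (μ : Measure X) [IsProbabilityMeasure μ]
    (hinv : ∀ t : ℝ≥0, ∀ A : Set X, MeasurableSet A → μ (φ t ⁻¹' A) = μ A) :
    μ D = 0 := by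
  have hstep : ∀ ε : ℝ≥0, 0 < ε →
      μ (D ∩ {x | (ε : ℝ≥0∞) ≤ ImpulsiveTau φb D x}) = 0 := by
    intro ε hε
    set Dε := D ∩ {x | (ε : ℝ≥0∞) ≤ ImpulsiveTau φb D x} with hDε
    have hDεm : MeasurableSet Dε := by
      have : {x : X | (ε : ℝ≥0∞) ≤ ImpulsiveTau φb D x} =
          {x : X | ImpulsiveTau φb D x < (ε : ℝ≥0∞)}ᶜ := by
        ext x; simp [not_lt]
      rw [hDε, this]
      exact hD.isClosed.measurableSet.inter (measurableSet_tau_lt hcb hD.isClosed ε).compl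
    refine null_of_forall_nat_mul_le (le_trans (measure_mono inter_subset_left) prob_le_one)
      ?_
    intro N
    rcases Nat.eq_zero_or_pos N with hN0 | hNpos
    · simp [hN0]
    have hNne : ((N : ℝ≥0)) ≠ 0 := by exact_mod_cast hNpos.ne'
    set δ : ℝ≥0 := ε / N with hδdef
    have hδ : 0 < δ := by positivity
    have hNδ : (N : ℝ≥0) * δ = ε := by
      rw [hδdef, mul_comm]
      exact div_mul_cancel₀ ε hNne
    have hdisj : ∀ k k' : ℕ, k < k' → k' < N →
        Disjoint (φ ((k : ℝ≥0) * δ) ⁻¹' Dε) (φ ((k' : ℝ≥0) * δ) ⁻¹' Dε) := by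
      intro k k' hkk' hk'N
      rw [Set.disjoint_left]
      intro z hzk hzk'
      set y := φ ((k : ℝ≥0) * δ) z with hy
      have hyDε : y ∈ Dε := hzk
      set u : ℝ≥0 := ((k' - k : ℕ) : ℝ≥0) * δ with hu
      have hu0 : 0 < u := by
        have : 0 < ((k' - k : ℕ) : ℝ≥0) := by
          have : 0 < k' - k := Nat.sub_pos_of_lt hkk'
          exact_mod_cast this
        exact mul_pos this hδ
      have huε : u < ε := by
        rw [← hNδ, hu]
        refine mul_lt_mul_of_pos_right ?_ hδ
        have : k' - k < N := lt_of_le_of_lt (Nat.sub_le k' k) hk'N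
        exact_mod_cast this
      have hsum : u + (k : ℝ≥0) * δ = (k' : ℝ≥0) * δ := by
        rw [hu, ← add_mul]
        congr 1
        have hnat : k' - k + k = k' := Nat.sub_add_cancel hkk'.le
        exact_mod_cast hnat
      have hφu : φ ((k' : ℝ≥0) * δ) z = φ u y := by
        rw [hy, ← hφ.1.2 ((k : ℝ≥0) * δ) u z, hsum]
      have huτ : (u : ℝ≥0∞) < ImpulsiveTau φb D y :=
        lt_of_lt_of_le (ENNReal.coe_lt_coe.mpr huε) hyDε.2
      have : φ u y ∈ D := (hφu ▸ hzk' : φ u y ∈ Dε).1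
      rw [hφ.2.1 y u huτ] at this
      exact not_mem_of_lt_tau hu0 huτ this
    have hker : ∀ k : ℕ, ∃ K : Set X, MeasurableSet K ∧
        K ⊆ φ ((k : ℝ≥0) * δ) ⁻¹' Dε ∧ μ K = μ Dε :=
      fun k => exists_kernel μ (hinv ((k : ℝ≥0) * δ)) hDεm
    choose K hKm hKsub hKμ using hker
    have hKdisj : (↑(Finset.range N) : Set ℕ).PairwiseDisjoint K := by
      intro i hi j hj hij
      simp only [Finset.coe_range, mem_Iio] at hi hj
      rcases lt_or_gt_of_ne hij with hlt | hgt
      · exact Set.disjoint_of_subset (hKsub i) (hKsub j) (hdisj i j hlt hj)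
      · exact (Set.disjoint_of_subset (hKsub j) (hKsub i) (hdisj j i hgt hi)).symm
    calc (N : ℝ≥0∞) * μ Dε = ∑ n ∈ Finset.range N, μ (K n) := by
          simp [hKμ, Finset.sum_const, nsmul_eq_mul]
      _ = μ (⋃ n ∈ Finset.range N, K n) :=
          (measure_biUnion_finset hKdisj fun n _ => hKm n).symm
      _ ≤ 1 := prob_le_one
  have hcover : D ⊆ ⋃ n : ℕ, D ∩ {x | ((1 / ((n : ℝ≥0) + 1) : ℝ≥0) : ℝ≥0∞) ≤
      ImpulsiveTau φb D x} := by
    intro x hxD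
    have hτ := hpos x
    rcases eq_or_ne (ImpulsiveTau φb D x) ⊤ with htop | htop
    · exact mem_iUnion.mpr ⟨0, hxD, by simp only [mem_setOf_eq]; rw [htop]; exact le_top⟩
    · set t := (ImpulsiveTau φb D x).toNNReal with ht
      have hct : (t : ℝ≥0∞) = ImpulsiveTau φb D x := ENNReal.coe_toNNReal htop
      have ht0 : 0 < t := by
        have : (0 : ℝ≥0∞) < (t : ℝ≥0∞) := hct ▸ hτ
        exact_mod_cast this
      obtain ⟨n, hn⟩ := exists_nat_gt ((t : ℝ≥0)⁻¹)
      have hrec : 1 / ((n : ℝ≥0) + 1) ≤ t := by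
        rw [div_le_iff₀ (by positivity), ← div_le_iff₀' ht0, div_eq_mul_inv, one_mul]
        exact le_of_lt (hn.trans_le (le_add_of_nonneg_right zero_le_one))
      refine mem_iUnion.mpr ⟨n, hxD, ?_⟩
      simp only [mem_setOf_eq]
      rw [← hct]
      exact_mod_cast hrec
  refine measure_mono_null hcover (measure_iUnion_null fun n => hstep _ (by positivity))


end Stmt19Aux

/-- Let `φ` be the impulsive semiflow of `(X, φb, D, I)` with `τ_D` continuous and
`I(Ω_φ ∩ D) ⊆ Ω_φ \ D`.  If `h` is a continuous bimeasurable bijection from `Ω_φ \ D`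
onto a compact metric space `Y` conjugating `φ` (restricted to `Ω_φ \ D`) with a
continuous semiflow `ψ` on `Y`, then `(ι ∘ h⁻¹)_*` is a bijection from the
`ψ`-invariant Borel probability measures on `Y` onto the `φ`-invariant Borel
probability measures on `X`. -/

theorem stmt19 {X : Type*} [MetricSpace X] [CompactSpace X] [Nonempty X]
    [MeasurableSpace X] [BorelSpace X]
    {Y : Type*} [MetricSpace Y] [CompactSpace Y]
    [MeasurableSpace Y] [BorelSpace Y]
    (φb : ℝ≥0 → X → X) (D : Set X) (I : X → X) (φ : ℝ≥0 → X → X)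
    (hφb : IsSemiflow φb) (hcb : Continuous fun p : ℝ≥0 × X => φb p.1 p.2)
    (hD : IsCompact D) (hI : ContinuousOn I D)
    (hpos : ∀ x, 0 < ImpulsiveTau φb D x)
    (hφ : IsImpulsiveSemiflow φb D I φ)
    (htauD : ContinuousOn
      (fun x => if x ∈ D then (0 : ℝ≥0∞) else ImpulsiveTau φb D x) (NonWanderingSet φ))
    (hID : I '' (NonWanderingSet φ ∩ D) ⊆ NonWanderingSet φ \ D)
    (ψ : ℝ≥0 → Y → Y) (hψ : IsSemiflow ψ)
    (hψc : Continuous fun p : ℝ≥0 × Y => ψ p.1 p.2)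
    (h : X → Y)
    (hhc : ContinuousOn h (NonWanderingSet φ \ D))
    (hbij : BijOn h (NonWanderingSet φ \ D) univ)
    (hhm : ∀ B : Set Y, MeasurableSet B →
      MeasurableSet ((NonWanderingSet φ \ D) ∩ h ⁻¹' B))
    (hhm' : ∀ A : Set X, A ⊆ NonWanderingSet φ \ D → MeasurableSet A →
      MeasurableSet (h '' A))
    (hconj : ∀ t : ℝ≥0, ∀ x ∈ NonWanderingSet φ \ D, ψ t (h x) = h (φ t x)) :
    BijOn (fun ν : Measure Y => ν.map (invFunOn h (NonWanderingSet φ \ D)))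
      {ν : Measure Y | IsProbabilityMeasure ν ∧
        ∀ t : ℝ≥0, ∀ B : Set Y, MeasurableSet B → ν (ψ t ⁻¹' B) = ν B}
      {μ : Measure X | IsProbabilityMeasure μ ∧
        ∀ t : ℝ≥0, ∀ A : Set X, MeasurableSet A → μ (φ t ⁻¹' A) = μ A} := by
  classical
  set S := NonWanderingSet φ \ D with hSdef
  have hSm : MeasurableSet S :=
    ((Stmt19Aux.isClosed_nonWanderingSet φ).measurableSet).diff hD.isClosed.measurableSet
  set g := invFunOn h S with hgdef
  have hsurj : ∀ y : Y, ∃ x ∈ S, h x = y := fun y => hbij.surjOn (mem_univ y)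
  have hgS : ∀ y, g y ∈ S := fun y => invFunOn_mem (hsurj y)
  have hhg : ∀ y, h (g y) = y := fun y => invFunOn_eq (hsurj y)
  have hgh : ∀ x ∈ S, g (h x) = x := fun x hx => hbij.injOn.leftInvOn_invFunOn hx
  have hgpre : ∀ E : Set X, g ⁻¹' E = h '' (E ∩ S) := by
    intro E; ext y
    constructor
    · intro hy; exact ⟨g y, ⟨hy, hgS y⟩, hhg y⟩
    · rintro ⟨x, ⟨hxE, hxS⟩, rfl⟩
      show g (h x) ∈ E
      rw [hgh x hxS]; exact hxE
  have hgmeas : Measurable g := by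
    intro A hA
    rw [hgpre A]
    exact hhm' _ inter_subset_right (hA.inter hSm)
  have hgSuniv : g ⁻¹' S = univ := eq_univ_of_forall hgS
  have hgSc : g ⁻¹' Sᶜ = ∅ := by
    ext y; simp [hgS y]
  have hginto : ∀ B : Set Y, g ⁻¹' (S ∩ h ⁻¹' B) = B := by
    intro B; ext y
    simp only [mem_preimage, mem_inter_iff]
    rw [hhg y]
    simp [hgS y]
  have hforward : ∀ x ∈ S, ∀ t : ℝ≥0, φ t x ∈ S :=
    fun x hx t => Stmt19Aux.forward_inv hφb hcb hD hI hpos hφ hID hx t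
  have hψtm : ∀ t : ℝ≥0, Measurable (ψ t) :=
    fun t => (hψc.comp (continuous_const.prodMk continuous_id)).measurable
  have hcomm : ∀ (t : ℝ≥0) (y : Y), φ t (g y) = g (ψ t y) := by
    intro t y
    have h1 : ψ t y = h (φ t (g y)) := by
      conv_lhs => rw [← hhg y]
      exact hconj t (g y) (hgS y)
    rw [h1, hgh _ (hforward _ (hgS y) t)]
  refine ⟨?_, ?_, ?_⟩
  · -- `MapsTo`
    rintro ν ⟨hνp, hνinv⟩
    have := hνp
    refine ⟨Measure.isProbabilityMeasure_map hgmeas.aemeasurable, ?_⟩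
    intro t A hA
    set C := ψ t ⁻¹' (g ⁻¹' A) with hC
    have hCm : MeasurableSet C := (hψtm t) (hgmeas hA)
    have hpre : g ⁻¹' (φ t ⁻¹' A) = C := by
      ext y
      simp only [mem_preimage, hC]
      rw [hcomm t y]
    have hPS : φ t ⁻¹' A ∩ S = S ∩ h ⁻¹' C := by
      ext x
      constructor
      · rintro ⟨hxA, hxS⟩
        refine ⟨hxS, ?_⟩
        show g (ψ t (h x)) ∈ A
        rw [hconj t x hxS, hgh _ (hforward x hxS t)]
        exact hxA
      · rintro ⟨hxS, hxC⟩
        refine ⟨?_, hxS⟩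
        have : g (ψ t (h x)) ∈ A := hxC
        rwa [hconj t x hxS, hgh _ (hforward x hxS t)] at this
    have hPSm : MeasurableSet (φ t ⁻¹' A ∩ S) := by
      rw [hPS]; exact hhm C hCm
    have e1 : (ν.map g) (φ t ⁻¹' A) ≤ ν C := by
      have hsubB : φ t ⁻¹' A ⊆ (φ t ⁻¹' A ∩ S) ∪ Sᶜ := by
        intro x hx
        by_cases hxS : x ∈ S
        · exact Or.inl ⟨hx, hxS⟩
        · exact Or.inr hxS
      calc (ν.map g) (φ t ⁻¹' A) ≤ (ν.map g) ((φ t ⁻¹' A ∩ S) ∪ Sᶜ) := measure_mono hsubB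
        _ = ν (g ⁻¹' ((φ t ⁻¹' A ∩ S) ∪ Sᶜ)) :=
            Measure.map_apply hgmeas (hPSm.union hSm.compl)
        _ = ν C := by
            rw [preimage_union, preimage_inter, hgSuniv, hgSc, inter_univ, union_empty, hpre]
    have e2 : ν C ≤ (ν.map g) (φ t ⁻¹' A) := by
      calc ν C = ν (g ⁻¹' (φ t ⁻¹' A ∩ S)) := by
            rw [preimage_inter, hgSuniv, inter_univ, hpre]
        _ = (ν.map g) (φ t ⁻¹' A ∩ S) := (Measure.map_apply hgmeas hPSm).symm
        _ ≤ (ν.map g) (φ t ⁻¹' A) := measure_mono inter_subset_left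
    have hval : (ν.map g) (φ t ⁻¹' A) = ν C := le_antisymm e1 e2
    rw [hval, hC, hνinv t _ (hgmeas hA), Measure.map_apply hgmeas hA]
  · -- injectivity
    rintro ν₁ ⟨hν₁p, -⟩ ν₂ ⟨hν₂p, -⟩ heq
    refine Measure.ext fun B hB => ?_
    have heq' : ν₁.map g = ν₂.map g := heq
    calc ν₁ B = ν₁ (g ⁻¹' (S ∩ h ⁻¹' B)) := by rw [hginto B]
      _ = (ν₁.map g) (S ∩ h ⁻¹' B) := (Measure.map_apply hgmeas (hhm B hB)).symm
      _ = (ν₂.map g) (S ∩ h ⁻¹' B) := by rw [heq']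
      _ = ν₂ (g ⁻¹' (S ∩ h ⁻¹' B)) := Measure.map_apply hgmeas (hhm B hB)
      _ = ν₂ B := by rw [hginto B]
  · -- surjectivity
    rintro μ ⟨hμp, hμinv⟩
    have := hμp
    have hΩnull : μ (NonWanderingSet φ)ᶜ = 0 := Stmt19Aux.omega_conull hφ.1 μ hμinv
    have hDnull : μ D = 0 := Stmt19Aux.D_null hcb hD hpos hφ μ hμinv
    have hScnull : μ Sᶜ = 0 := by
      have hsub : Sᶜ ⊆ (NonWanderingSet φ)ᶜ ∪ D := by
        rw [hSdef]
        intro x hx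
        rw [mem_compl_iff, mem_diff, not_and_or, not_not] at hx
        rcases hx with hx | hx
        · exact Or.inl hx
        · exact Or.inr hx
      exact measure_mono_null hsub (measure_union_null hΩnull hDnull)
    have hconull : ∀ E : Set X, μ E = μ (E ∩ S) := by
      intro E
      refine le_antisymm ?_ (measure_mono inter_subset_left)
      calc μ E ≤ μ (E ∩ S) + μ (E \ S) := measure_le_inter_add_diff μ E S
        _ ≤ μ (E ∩ S) + μ Sᶜ := add_le_add_right (measure_mono fun x hx => hx.2) _
        _ = μ (E ∩ S) := by rw [hScnull, add_zero]
    have hμS : μ S = 1 := by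
      have huniv := hconull univ
      rw [univ_inter, measure_univ] at huniv
      exact huniv.symm
    have hSne : S.Nonempty :=
      nonempty_of_measure_ne_zero (by rw [hμS]; exact one_ne_zero)
    obtain ⟨x₀, hx₀⟩ := hSne
    set H : X → Y := fun x => if x ∈ S then h x else h x₀ with hHdef
    have hHS : ∀ x ∈ S, H x = h x := fun x hx => if_pos hx
    have hHm : Measurable H := by
      intro B hB
      have hrep : H ⁻¹' B = (S ∩ h ⁻¹' B) ∪ (Sᶜ ∩ {x : X | h x₀ ∈ B}) := by
        ext x
        by_cases hxS : x ∈ S <;> simp [hHdef, hxS]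
      rw [hrep]
      refine (hhm B hB).union (hSm.compl.inter ?_)
      by_cases hmem : h x₀ ∈ B
      · simp only [hmem]; exact MeasurableSet.univ.congr (by ext x; simp [hmem])
      · exact MeasurableSet.empty.congr (by ext x; simp [hmem])
    set ν := μ.map H with hνdef
    have hνp : IsProbabilityMeasure ν := Measure.isProbabilityMeasure_map hHm.aemeasurable
    refine ⟨ν, ⟨hνp, ?_⟩, ?_⟩
    · -- ψ-invariance of ν
      intro t B hB
      have hset : H ⁻¹' (ψ t ⁻¹' B) ∩ S = φ t ⁻¹' (H ⁻¹' B) ∩ S := by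
        ext x
        constructor
        · rintro ⟨hx1, hxS⟩
          refine ⟨?_, hxS⟩
          show H (φ t x) ∈ B
          rw [hHS _ (hforward x hxS t), ← hconj t x hxS, ← hHS x hxS]
          exact hx1
        · rintro ⟨hx1, hxS⟩
          refine ⟨?_, hxS⟩
          show ψ t (H x) ∈ B
          rw [hHS x hxS, hconj t x hxS, ← hHS _ (hforward x hxS t)]
          exact hx1
      calc ν (ψ t ⁻¹' B) = μ (H ⁻¹' (ψ t ⁻¹' B)) :=
            Measure.map_apply hHm (hB.preimage (hψtm t))
        _ = μ (H ⁻¹' (ψ t ⁻¹' B) ∩ S) := hconull _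
        _ = μ (φ t ⁻¹' (H ⁻¹' B) ∩ S) := by rw [hset]
        _ = μ (φ t ⁻¹' (H ⁻¹' B)) := (hconull _).symm
        _ = μ (H ⁻¹' B) := hμinv t _ (hHm hB)
        _ = ν B := (Measure.map_apply hHm hB).symm
    · -- ν pushes forward to μ
      refine Measure.ext fun A hA => ?_
      have h1 : (ν.map g) A = μ (H ⁻¹' (g ⁻¹' A)) := by
        rw [Measure.map_apply hgmeas hA, Measure.map_apply hHm (hgmeas hA)]
      have hset : H ⁻¹' (g ⁻¹' A) ∩ S = A ∩ S := by
        ext x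
        constructor
        · rintro ⟨hx1, hxS⟩
          refine ⟨?_, hxS⟩
          have hga : g (H x) ∈ A := hx1
          rwa [hHS x hxS, hgh x hxS] at hga
        · rintro ⟨hxA, hxS⟩
          refine ⟨?_, hxS⟩
          show g (H x) ∈ A
          rw [hHS x hxS, hgh x hxS]
          exact hxA
      show (ν.map g) A = μ A
      rw [h1, hconull (H ⁻¹' (g ⁻¹' A)), hset, ← hconull A]
end
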